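/- arXiv:2512.24910 — 5 statements merged into one kernel-verified Lean document; each statement's English description precedes it below -/
import Mathlib

section
/- Let π be a probability mass function on ℕ with finite λ-moments for λ ≤ λ′, and I ⊆ ℕ. Then π^λ(·|I) is stochastically dominated by π^{λ′}(·|I): for every m, Σ_{k ≥ m, k ∈ I} π^λ(k|I) ≤ Σ_{k ≥ m, k ∈ I} π^{λ′}(k|I). -/
open scoped BigOperators
open scoped Classical

/-- The `l`-tilted measure of a pmf `π` on `ℕ`. -/
noncomputable def tilt (π : ℕ → ℝ) (l : ℝ) (k : ℕ) : ℝ :=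
  l ^ k * π k / (∑' j : ℕ, l ^ j * π j)

/-- The `l`-tilted measure conditioned on the set `I`. -/
noncomputable def condTilt (π : ℕ → ℝ) (l : ℝ) (I : Set ℕ) (k : ℕ) : ℝ :=
  (if k ∈ I then tilt π l k else 0) / (∑' j : ℕ, if j ∈ I then tilt π l j else 0)

/-- Splitting a summable series at `m`. -/
lemma tsum_split (f : ℕ → ℝ) (hf0 : ∀ k, 0 ≤ f k) (hf : Summable f) (m : ℕ) :
    (∑' k, f k) = (∑' k, if m ≤ k then f k else 0) + ∑ j ∈ Finset.range m, f j := by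
  have hg : Summable (fun k => if m ≤ k then f k else 0) := by
    apply Summable.of_nonneg_of_le (fun k => by split <;> simp [hf0 k]) _ hf
    intro k; split <;> simp [hf0 k]
  have hh : Summable (fun k => if m ≤ k then 0 else f k) :=
    summable_of_ne_finset_zero (s := Finset.range m)
      (fun k hk => by simp only [Finset.mem_range, not_lt] at hk; simp [hk])
  have h1 : (∑' k, f k) = (∑' k, ((if m ≤ k then f k else 0) + (if m ≤ k then 0 else f k))) := by
    congr 1; funext k; split <;> simp
  rw [h1, Summable.tsum_add hg hh]
  congr 1
  rw [tsum_eq_sum (s := Finset.range m)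
    (fun k hk => by simp only [Finset.mem_range, not_lt] at hk; simp [hk])]
  apply Finset.sum_congr rfl
  intro j hj
  simp only [Finset.mem_range] at hj
  simp [Nat.not_le.mpr hj]

/-- Stochastic domination of conditioned tilted measures: for `0 < λ ≤ λ′`
with finite moments, `π^λ(·|I)` is stochastically dominated by `π^{λ′}(·|I)`:
for every `m`, `∑_{k ≥ m} π^λ(k|I) ≤ ∑_{k ≥ m} π^{λ′}(k|I)`. -/
theorem condTilt_stochastic_order (π : ℕ → ℝ)
    (hπ0 : ∀ k, 0 ≤ π k) (hπ1 : HasSum π 1)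
    (l l' : ℝ) (hl : 0 < l) (hll' : l ≤ l')
    (hZ : Summable (fun k : ℕ => l ^ k * π k))
    (hZ' : Summable (fun k : ℕ => l' ^ k * π k))
    (I : Set ℕ)
    (hI : 0 < ∑' j : ℕ, if j ∈ I then tilt π l j else 0)
    (hI' : 0 < ∑' j : ℕ, if j ∈ I then tilt π l' j else 0) :
    ∀ m : ℕ,
      (∑' k : ℕ, if m ≤ k then condTilt π l I k else 0) ≤
        ∑' k : ℕ, if m ≤ k then condTilt π l' I k else 0 := by
  intro m
  have hl' : 0 < l' := lt_of_lt_of_le hl hll'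
  set A : ℕ → ℝ := fun k => if k ∈ I then π k else 0 with hA
  have hA0 : ∀ k, 0 ≤ A k := fun k => by
    simp only [hA]; split <;> simp [hπ0 k]
  -- some k has π k > 0
  obtain ⟨k₀, hk₀⟩ : ∃ k, 0 < π k := by
    by_contra h
    push_neg at h
    have : ∀ k, π k = 0 := fun k => le_antisymm (h k) (hπ0 k)
    have := hπ1.tsum_eq
    simp [this] at *
    have : (0:ℝ) = 1 := by
      rw [← hπ1.tsum_eq]; simp [‹∀ k, π k = 0›]
    norm_num at this
  have hZpos : ∀ (t : ℝ), 0 < t → Summable (fun k : ℕ => t ^ k * π k) →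
      0 < ∑' j : ℕ, t ^ j * π j := by
    intro t ht hs
    have h0 : 0 < t ^ k₀ * π k₀ := mul_pos (pow_pos ht k₀) hk₀
    exact lt_of_lt_of_le h0 (Summable.le_tsum hs k₀ (fun j _ => mul_nonneg (pow_pos ht j).le (hπ0 j)))
  have hZp : 0 < ∑' j : ℕ, l ^ j * π j := hZpos l hl hZ
  have hZp' : 0 < ∑' j : ℕ, l' ^ j * π j := hZpos l' hl' hZ'
  -- summability of tilted conditioned weights
  have hSA : ∀ (t : ℝ), 0 < t → Summable (fun k : ℕ => t ^ k * π k) →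
      Summable (fun k => t ^ k * A k) := by
    intro t ht hs
    apply Summable.of_nonneg_of_le (fun k => mul_nonneg (pow_pos ht k).le (hA0 k)) _ hs
    intro k
    simp only [hA]; split
    · exact le_refl _
    · simp [mul_nonneg (pow_pos ht k).le (hπ0 k)]
  have hSl : Summable (fun k => l ^ k * A k) := hSA l hl hZ
  have hSl' : Summable (fun k => l' ^ k * A k) := hSA l' hl' hZ'
  set S : ℝ := ∑' j, l ^ j * A j with hS
  set S' : ℝ := ∑' j, l' ^ j * A j with hS'
  -- rewrite the conditional denominators
  have hden : ∀ (t : ℝ), (0:ℝ) < t →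
      (∑' j : ℕ, if j ∈ I then tilt π t j else 0) =
        (∑' j, t ^ j * A j) / (∑' j : ℕ, t ^ j * π j) := by
    intro t ht
    rw [← tsum_div_const]
    congr 1; funext j
    simp only [tilt, hA]
    split <;> simp
  have hSpos : 0 < S := by
    have := hI
    rw [hden l hl] at this
    have := mul_pos this hZp
    rwa [div_mul_cancel₀] at this
    exact hZp.ne'
  have hSpos' : 0 < S' := by
    have := hI'
    rw [hden l' hl'] at this
    have := mul_pos this hZp'
    rwa [div_mul_cancel₀] at this
    exact hZp'.ne'
  -- rewrite condTilt
  have hnum : ∀ (t : ℝ) (k : ℕ),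
      (if k ∈ I then tilt π t k else 0) = (t ^ k * A k) / (∑' j : ℕ, t ^ j * π j) := by
    intro t k
    simp only [tilt, hA]
    split <;> simp
  have hcond : ∀ k, condTilt π l I k = l ^ k * A k / S := by
    intro k
    rw [condTilt, hden l hl, hnum l k, div_div_div_cancel_right₀ hZp.ne']
  have hcond' : ∀ k, condTilt π l' I k = l' ^ k * A k / S' := by
    intro k
    rw [condTilt, hden l' hl', hnum l' k, div_div_div_cancel_right₀ hZp'.ne']
  -- tails and heads
  set T : ℝ := ∑' k, if m ≤ k then l ^ k * A k else 0 with hT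
  set T' : ℝ := ∑' k, if m ≤ k then l' ^ k * A k else 0 with hT'
  set F : ℝ := ∑ j ∈ Finset.range m, l ^ j * A j with hF
  set F' : ℝ := ∑ j ∈ Finset.range m, l' ^ j * A j with hF'
  have hSsplit : S = T + F := tsum_split _ (fun k => mul_nonneg (pow_pos hl k).le (hA0 k)) hSl m
  have hSsplit' : S' = T' + F' :=
    tsum_split _ (fun k => mul_nonneg (pow_pos hl' k).le (hA0 k)) hSl' m
  have hgsum : Summable (fun k => if m ≤ k then l ^ k * A k else 0) := by
    apply Summable.of_nonneg_of_le
      (fun k => by split <;> simp [mul_nonneg (pow_pos hl k).le (hA0 k)]) _ hSl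
    intro k; split
    · exact le_refl _
    · simp [mul_nonneg (pow_pos hl k).le (hA0 k)]
  have hgsum' : Summable (fun k => if m ≤ k then l' ^ k * A k else 0) := by
    apply Summable.of_nonneg_of_le
      (fun k => by split <;> simp [mul_nonneg (pow_pos hl' k).le (hA0 k)]) _ hSl'
    intro k; split
    · exact le_refl _
    · simp [mul_nonneg (pow_pos hl' k).le (hA0 k)]
  have hT0 : 0 ≤ T := tsum_nonneg (fun k => by
    split <;> simp [mul_nonneg (pow_pos hl k).le (hA0 k)])
  have hT0' : 0 ≤ T' := tsum_nonneg (fun k => by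
    split <;> simp [mul_nonneg (pow_pos hl' k).le (hA0 k)])
  -- key monotonicity
  have key : ∀ j k : ℕ, j ≤ k → l ^ k * l' ^ j ≤ l' ^ k * l ^ j := by
    intro j k hjk
    have e1 : l ^ k = l ^ j * l ^ (k - j) := by
      rw [← pow_add]; congr 1; omega
    have e2 : l' ^ k = l' ^ j * l' ^ (k - j) := by
      rw [← pow_add]; congr 1; omega
    rw [e1, e2]
    have h1 : l ^ (k - j) ≤ l' ^ (k - j) := pow_le_pow_left₀ hl.le hll' (k - j)
    have h2 : 0 ≤ l ^ j * l' ^ j := mul_nonneg (pow_pos hl j).le (pow_pos hl' j).le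
    nlinarith
  -- main cross inequality : T * F' ≤ T' * F
  have hmain : T * F' ≤ T' * F := by
    rw [hT, hT', ← tsum_mul_right, ← tsum_mul_right]
    apply Summable.tsum_le_tsum _ (hgsum.mul_right F') (hgsum'.mul_right F)
    intro k
    by_cases hk : m ≤ k
    · simp only [if_pos hk, hF, hF', Finset.sum_mul, Finset.mul_sum]
      apply Finset.sum_le_sum
      intro j hj
      simp only [Finset.mem_range] at hj
      have hjk : j ≤ k := by omega
      have := key j k hjk
      have hAA : 0 ≤ A k * A j := mul_nonneg (hA0 k) (hA0 j)
      nlinarith [mul_le_mul_of_nonneg_right this hAA]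
    · simp [hk]
  -- finish
  calc (∑' k : ℕ, if m ≤ k then condTilt π l I k else 0)
      = T / S := by
        rw [hT, ← tsum_div_const]
        congr 1; funext k
        rw [hcond k]
        split <;> simp
    _ ≤ T' / S' := by
        rw [div_le_div_iff₀ hSpos hSpos']
        rw [hSsplit, hSsplit']
        nlinarith
    _ = ∑' k : ℕ, if m ≤ k then condTilt π l' I k else 0 := by
        rw [hT', ← tsum_div_const]
        congr 1; funext k
        rw [hcond' k]
        split <;> simp
end

section
/- (Efron's theorem, n = 2, discrete case) Let ν₁, ν₂ be log-concave probability mass functions on ℕ and X₁, X₂ independent with laws ν₁, ν₂. Then for each k with P(X₁+X₂ = k) > 0 and P(X₁+X₂ = k+1) > 0, the conditional law of X₁ given X₁+X₂ = k is stochastically dominated by the conditional law of X₁ given X₁+X₂ = k+1: for all m, P(X₁ ≥ m | X₁+X₂ = k) ≤ P(X₁ ≥ m | X₁+X₂ = k+1). -/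
open scoped BigOperators
open scoped Classical

/-- A log-concave probability mass function on `ℕ`: nonnegative, positive on
the initial segment of its support, and `ν(x)ν(x+2) ≤ ν(x+1)²`. -/
def LogConcavePMF (ν : ℕ → ℝ) : Prop :=
  (∀ x, 0 ≤ ν x) ∧
  (∀ x y : ℕ, x ≤ y → 0 < ν y → 0 < ν x) ∧
  (∀ x : ℕ, ν x * ν (x + 2) ≤ ν (x + 1) ^ 2)

private lemma lc_ratio_aux (ν : ℕ → ℝ) (h : LogConcavePMF ν) :
    ∀ d u : ℕ, ν u * ν (u + d + 1) ≤ ν (u + 1) * ν (u + d) := by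
  obtain ⟨h0, hsupp, hlc⟩ := h
  intro d
  induction d with
  | zero => intro u; simp [mul_comm]
  | succ d ih =>
    intro u
    by_cases hz : ν (u + d + 1) = 0
    · have hz2 : ν (u + d + 2) = 0 := by
        by_contra hne
        have : 0 < ν (u + d + 1) :=
          hsupp (u + d + 1) (u + d + 2) (by omega)
            (lt_of_le_of_ne (h0 _) (Ne.symm hne))
        exact this.ne' hz
      have : u + (d + 1) + 1 = u + d + 2 := by omega
      rw [this, hz2, mul_zero]
      have : u + (d + 1) = u + d + 1 := by omega
      rw [this, hz, mul_zero]
    · have hp1 : 0 < ν (u + d + 1) := lt_of_le_of_ne (h0 _) (Ne.symm hz)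
      have hp0 : 0 < ν (u + d) := hsupp (u + d) (u + d + 1) (by omega) hp1
      have h1 : ν u * ν (u + d + 1) ≤ ν (u + 1) * ν (u + d) := ih u
      have h2 : ν (u + d) * ν (u + d + 2) ≤ ν (u + d + 1) ^ 2 := hlc (u + d)
      have e1 : u + (d + 1) + 1 = u + d + 2 := by omega
      have e2 : u + (d + 1) = u + d + 1 := by omega
      rw [e1, e2]
      nlinarith [h0 u, h0 (u + 1), h0 (u + d + 2),
        mul_le_mul_of_nonneg_left h2 (mul_nonneg (h0 u) (h0 (u + d + 1))),
        mul_le_mul_of_nonneg_right h1 (sq_nonneg (ν (u + d + 1)))]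

private lemma lc_ratio (ν : ℕ → ℝ) (h : LogConcavePMF ν) {u v : ℕ} (huv : u ≤ v) :
    ν u * ν (v + 1) ≤ ν (u + 1) * ν v := by
  obtain ⟨d, rfl⟩ := Nat.exists_eq_add_of_le huv
  exact lc_ratio_aux ν h d u

/-- Efron's theorem for `n = 2`, discrete case: if `X₁, X₂` are independent
with log-concave laws `ν₁, ν₂` on `ℕ`, then for `k` with
`P(X₁+X₂ = k) > 0` and `P(X₁+X₂ = k+1) > 0`, the conditional law of `X₁`
given `X₁+X₂ = k` is stochastically dominated by the conditional law given
`X₁+X₂ = k+1`: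
`P(X₁ ≥ m | X₁+X₂ = k) ≤ P(X₁ ≥ m | X₁+X₂ = k+1)` for all `m`. -/
theorem efron_two (ν₁ ν₂ : ℕ → ℝ)
    (h₁ : LogConcavePMF ν₁) (h₂ : LogConcavePMF ν₂)
    (h₁s : HasSum ν₁ 1) (h₂s : HasSum ν₂ 1) (k : ℕ)
    (hk : 0 < ∑ x ∈ Finset.range (k + 1), ν₁ x * ν₂ (k - x))
    (hk' : 0 < ∑ x ∈ Finset.range (k + 2), ν₁ x * ν₂ (k + 1 - x)) :
    ∀ m : ℕ,
      (∑ x ∈ Finset.range (k + 1), if m ≤ x then ν₁ x * ν₂ (k - x) else 0) /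
          (∑ x ∈ Finset.range (k + 1), ν₁ x * ν₂ (k - x)) ≤
        (∑ x ∈ Finset.range (k + 2), if m ≤ x then ν₁ x * ν₂ (k + 1 - x) else 0) /
          (∑ x ∈ Finset.range (k + 2), ν₁ x * ν₂ (k + 1 - x)) := by
  intro m
  obtain ⟨h₁0, h₁supp, h₁lc⟩ := h₁
  have h₂' : LogConcavePMF ν₂ := h₂
  obtain ⟨h₂0, h₂supp, h₂lc⟩ := h₂
  set a : ℕ → ℝ := fun x => if x ≤ k then ν₁ x * ν₂ (k - x) else 0 with ha
  set b : ℕ → ℝ := fun x => ν₁ x * ν₂ (k + 1 - x) with hb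
  have ha0 : ∀ x, 0 ≤ a x := by
    intro x
    simp only [ha]
    split
    · exact mul_nonneg (h₁0 x) (h₂0 _)
    · exact le_refl 0
  have hb0 : ∀ x, 0 ≤ b x := fun x => mul_nonneg (h₁0 x) (h₂0 _)
  set S := Finset.range (k + 2) with hS
  -- rewrite the `a`-sums over range (k+2)
  have hA : (∑ x ∈ Finset.range (k + 1), ν₁ x * ν₂ (k - x)) = ∑ x ∈ S, a x := by
    have h1 : ∑ x ∈ S, a x = (∑ x ∈ Finset.range (k + 1), a x) + a (k + 1) := by
      rw [hS]; exact Finset.sum_range_succ a (k + 1)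
    have h2 : a (k + 1) = 0 := by simp [ha]
    rw [h1, h2, add_zero]
    exact Finset.sum_congr rfl fun x hx => by
      rw [Finset.mem_range] at hx
      simp [ha, Nat.lt_succ_iff.mp hx]
  have hAm : (∑ x ∈ Finset.range (k + 1), if m ≤ x then ν₁ x * ν₂ (k - x) else 0)
      = ∑ x ∈ S, (if m ≤ x then a x else 0) := by
    have h1 : (∑ x ∈ S, if m ≤ x then a x else 0)
        = (∑ x ∈ Finset.range (k + 1), if m ≤ x then a x else 0)
          + (if m ≤ k + 1 then a (k + 1) else 0) := by
      rw [hS]; exact Finset.sum_range_succ _ (k + 1)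
    have h2 : (if m ≤ k + 1 then a (k + 1) else 0) = 0 := by simp [ha]
    rw [h1, h2, add_zero]
    refine Finset.sum_congr rfl fun x hx => ?_
    rw [Finset.mem_range] at hx
    have hxk : x ≤ k := Nat.lt_succ_iff.mp hx
    simp [ha, hxk]
  rw [hA, hAm]
  have hkA : 0 < ∑ x ∈ S, a x := hA ▸ hk
  rw [div_le_div_iff₀ hkA hk']
  -- key cross inequality
  have key : ∀ x ∈ S, ∀ y ∈ S, y < m → m ≤ x → a x * b y ≤ b x * a y := by
    intro x hx y hy hym hmx
    by_cases hxk : x ≤ k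
    · have hyx : y < x := lt_of_lt_of_le hym hmx
      have hyk : y ≤ k := le_trans hyx.le hxk
      have huv : k - x ≤ k - y := Nat.sub_le_sub_left hyx.le k
      have h2 := lc_ratio ν₂ h₂' huv
      have e1 : k - y + 1 = k + 1 - y := by omega
      have e2 : k - x + 1 = k + 1 - x := by omega
      rw [e1, e2] at h2
      have hxx : a x = ν₁ x * ν₂ (k - x) := by simp [ha, hxk]
      have hyy : a y = ν₁ y * ν₂ (k - y) := by simp [ha, hyk]
      have hbx : b x = ν₁ x * ν₂ (k + 1 - x) := rfl
      have hby : b y = ν₁ y * ν₂ (k + 1 - y) := rfl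
      rw [hxx, hyy, hbx, hby]
      have hnn : 0 ≤ ν₁ x * ν₁ y := mul_nonneg (h₁0 x) (h₁0 y)
      nlinarith [mul_le_mul_of_nonneg_left h2 hnn]
    · have : a x = 0 := by simp [ha, hxk]
      rw [this, zero_mul]
      exact mul_nonneg (hb0 x) (ha0 y)
  -- pairwise symmetrized inequality
  have pair : ∀ x ∈ S, ∀ y ∈ S,
      (if m ≤ x then a x else 0) * b y + (if m ≤ y then a y else 0) * b x ≤
      (if m ≤ x then b x else 0) * a y + (if m ≤ y then b y else 0) * a x := by
    intro x hx y hy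
    by_cases hmx : m ≤ x
    · by_cases hmy : m ≤ y
      · simp only [if_pos hmx, if_pos hmy]
        exact le_of_eq (by ring)
      · simp only [if_pos hmx, if_neg hmy, zero_mul, add_zero]
        have := key x hx y hy (not_le.mp hmy) hmx
        linarith
    · by_cases hmy : m ≤ y
      · simp only [if_neg hmx, if_pos hmy, zero_mul, zero_add, add_zero]
        have := key y hy x hx (not_le.mp hmx) hmy
        linarith
      · simp [hmx, hmy]
  -- sum it up
  have e1 : (∑ x ∈ S, if m ≤ x then a x else 0) * (∑ x ∈ S, b x)
      = ∑ x ∈ S, ∑ y ∈ S, (if m ≤ x then a x else 0) * b y :=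
    Finset.sum_mul_sum S S _ _
  have e2 : (∑ x ∈ S, if m ≤ x then b x else 0) * (∑ x ∈ S, a x)
      = ∑ x ∈ S, ∑ y ∈ S, (if m ≤ x then b x else 0) * a y :=
    Finset.sum_mul_sum S S _ _
  have e1' : (∑ x ∈ S, if m ≤ x then a x else 0) * (∑ x ∈ S, b x)
      = ∑ x ∈ S, ∑ y ∈ S, (if m ≤ y then a y else 0) * b x := by
    rw [e1]; exact Finset.sum_comm
  have e2' : (∑ x ∈ S, if m ≤ x then b x else 0) * (∑ x ∈ S, a x)
      = ∑ x ∈ S, ∑ y ∈ S, (if m ≤ y then b y else 0) * a x := by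
    rw [e2]; exact Finset.sum_comm
  have big : (∑ x ∈ S, ∑ y ∈ S, (if m ≤ x then a x else 0) * b y)
      + (∑ x ∈ S, ∑ y ∈ S, (if m ≤ y then a y else 0) * b x)
      ≤ (∑ x ∈ S, ∑ y ∈ S, (if m ≤ x then b x else 0) * a y)
      + (∑ x ∈ S, ∑ y ∈ S, (if m ≤ y then b y else 0) * a x) := by
    rw [← Finset.sum_add_distrib, ← Finset.sum_add_distrib]
    refine Finset.sum_le_sum fun x hx => ?_
    rw [← Finset.sum_add_distrib, ← Finset.sum_add_distrib]
    exact Finset.sum_le_sum fun y hy => pair x hx y hy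
  linarith [e1, e1', e2, e2', big]
end

section
/- (Efron's theorem, general n, discrete case) Let ν₁,…,νₙ be log-concave probability mass functions on ℕ and X₁,…,Xₙ independent with laws νᵢ. Then the canonical measures μₙ(·|k) (law of (X₁,…,Xₙ) conditioned on X₁+⋯+Xₙ = k) are stochastically increasing in k: for every k with both μₙ(·|k) and μₙ(·|k+1) well-defined, and every coordinatewise-increasing bounded function f : ℕⁿ → ℝ, E[f(𝐗ₙ) | Sₙ = k] ≤ E[f(𝐗ₙ) | Sₙ = k+1]. -/
open scoped BigOperators
open scoped Classical
open Finset

/-- Law of the sum of `n` independent variables with marginals `ν i`. -/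
noncomputable def sumLaw {n : ℕ} (ν : Fin n → ℕ → ℝ) (k : ℕ) : ℝ :=
  ∑' y : Fin n → ℕ, if (∑ i, y i) = k then ∏ i, ν i (y i) else 0

/-- generalized log-concavity -/
def GLC (a : ℕ → ℝ) : Prop := ∀ p q, p ≤ q → a p * a (q+1) ≤ a (p+1) * a q
/-- downward positivity -/
def DP (a : ℕ → ℝ) : Prop := ∀ x y : ℕ, x ≤ y → 0 < a y → 0 < a x

lemma glc_iter {a : ℕ → ℝ} (hag : GLC a) :
    ∀ d i j : ℕ, i ≤ j → a i * a (j + d) ≤ a (i + d) * a j := by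
  intro d
  induction d with
  | zero => intro i j _; simp [mul_comm]
  | succ d ih =>
    intro i j hij
    rcases eq_or_lt_of_le hij with rfl | hlt
    · ring_nf; rfl
    · have h1 := hag i (j + d) (by omega)
      have h2 := ih (i+1) j (by omega)
      calc a i * a (j + (d+1)) = a i * a ((j + d) + 1) := by ring_nf
        _ ≤ a (i+1) * a (j+d) := h1
        _ ≤ a ((i+1) + d) * a j := h2
        _ = a (i + (d+1)) * a j := by ring_nf

lemma glc_of_pmf {a : ℕ → ℝ} (h0 : ∀ x, 0 ≤ a x) (hdp : DP a)
    (hlc : ∀ x : ℕ, a x * a (x + 2) ≤ a (x + 1) ^ 2) : GLC a := by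
  have key : ∀ d p : ℕ, a p * a (p + d + 1) ≤ a (p + 1) * a (p + d) := by
    intro d
    induction d with
    | zero => intro p; simp [mul_comm]
    | succ d ih =>
      intro p
      have h1 := ih p
      have h2 := hlc (p + d)
      have e1 : p + (d+1) + 1 = p + d + 2 := by ring
      have e2 : p + (d+1) = p + d + 1 := by ring
      rw [e1, e2]
      rcases lt_or_ge 0 (a (p + d + 2)) with hpos | hz
      · have hq1 : 0 < a (p + d + 1) := hdp _ _ (by omega) hpos
        have hq0 : 0 < a (p + d) := hdp _ _ (by omega) hq1
        have h3 : a p * a (p+d+1) * a (p+d+2) ≤ a (p+1) * a (p+d) * a (p+d+2) :=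
          mul_le_mul_of_nonneg_right h1 (h0 _)
        have h4 : a (p+1) * (a (p+d) * a (p+d+2)) ≤ a (p+1) * a (p+d+1)^2 :=
          mul_le_mul_of_nonneg_left h2 (h0 _)
        have h5 : a p * a (p+d+2) * a (p+d+1) ≤ a (p+1) * a (p+d+1) * a (p+d+1) := by nlinarith
        exact le_of_mul_le_mul_right h5 hq1
      · have : a (p + d + 2) = 0 := le_antisymm hz (h0 _)
        rw [this, mul_zero]
        exact mul_nonneg (h0 _) (h0 _)
  intro p q hpq
  obtain ⟨d, rfl⟩ : ∃ d, q = p + d := ⟨q - p, by omega⟩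
  exact key d p

noncomputable def conv (a b : ℕ → ℝ) : ℕ → ℝ := fun m => ∑ i ∈ range (m+1), a i * b (m - i)

lemma conv_nonneg {a b : ℕ → ℝ} (ha : ∀ i, 0 ≤ a i) (hb : ∀ i, 0 ≤ b i) (m : ℕ) :
    0 ≤ conv a b m :=
  Finset.sum_nonneg fun i _ => mul_nonneg (ha i) (hb _)

lemma conv_DP {a b : ℕ → ℝ} (ha : ∀ i, 0 ≤ a i) (hb : ∀ i, 0 ≤ b i)
    (hadp : DP a) (hbdp : DP b) : DP (conv a b) := by
  intro x y hxy hy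
  obtain ⟨i, hi, hipos⟩ : ∃ i ∈ range (y+1), 0 < a i * b (y - i) := by
    by_contra hcon
    push_neg at hcon
    have : conv a b y ≤ 0 := Finset.sum_nonpos hcon
    linarith
  have hia : 0 < a i := by
    rcases (mul_pos_iff.1 hipos) with ⟨h1, _⟩ | ⟨h1, h2⟩
    · exact h1
    · exact absurd h2 (not_lt.2 (hb _))
  have hib : 0 < b (y - i) := by
    nlinarith [ha i, hb (y-i)]
  rcases le_or_gt i x with hix | hix
  · have hterm : 0 < a i * b (x - i) :=
      mul_pos hia (hbdp _ _ (by omega) hib)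
    calc (0:ℝ) < a i * b (x - i) := hterm
      _ ≤ conv a b x := Finset.single_le_sum (f := fun j => a j * b (x - j))
          (fun j _ => mul_nonneg (ha j) (hb _)) (by simp [Finset.mem_range]; omega)
  · have hterm : 0 < a x * b (x - x) :=
      mul_pos (hadp _ _ (by omega) hia) (by simpa using hbdp 0 (y-i) (by omega) hib)
    calc (0:ℝ) < a x * b (x - x) := hterm
      _ ≤ conv a b x := Finset.single_le_sum (f := fun j => a j * b (x - j))
          (fun j _ => mul_nonneg (ha j) (hb _)) (by simp [Finset.mem_range])

/-- 2×2 Cauchy–Binet style inequality. -/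
lemma cb (I : Finset ℕ) (x y s t : ℕ → ℝ)
    (h : ∀ i ∈ I, ∀ j ∈ I, 0 ≤ (x i * y j - x j * y i) * (s i * t j - s j * t i)) :
    (∑ i ∈ I, x i * t i) * (∑ i ∈ I, y i * s i) ≤
      (∑ i ∈ I, x i * s i) * (∑ i ∈ I, y i * t i) := by
  have key : (∑ i ∈ I, ∑ j ∈ I, (x i * y j - x j * y i) * (s i * t j - s j * t i))
      = 2 * ((∑ i ∈ I, x i * s i) * (∑ i ∈ I, y i * t i)
        - (∑ i ∈ I, x i * t i) * (∑ i ∈ I, y i * s i)) := by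
    have e1 : ∀ i ∈ I, (∑ j ∈ I, (x i * y j - x j * y i) * (s i * t j - s j * t i))
        = (x i * s i) * (∑ j ∈ I, y j * t j) - (x i * t i) * (∑ j ∈ I, y j * s j)
          - ((y i * s i) * (∑ j ∈ I, x j * t j) - (y i * t i) * (∑ j ∈ I, x j * s j)) := by
      intro i _
      rw [Finset.mul_sum, Finset.mul_sum, Finset.mul_sum, Finset.mul_sum,
        ← Finset.sum_sub_distrib, ← Finset.sum_sub_distrib, ← Finset.sum_sub_distrib]
      exact Finset.sum_congr rfl fun j _ => by ring
    rw [Finset.sum_congr rfl e1, Finset.sum_sub_distrib, Finset.sum_sub_distrib,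
      Finset.sum_sub_distrib, ← Finset.sum_mul, ← Finset.sum_mul, ← Finset.sum_mul,
      ← Finset.sum_mul]
    ring
  have hnn : 0 ≤ ∑ i ∈ I, ∑ j ∈ I, (x i * y j - x j * y i) * (s i * t j - s j * t i) :=
    Finset.sum_nonneg fun i hi => Finset.sum_nonneg fun j hj => h i hi j hj
  rw [key] at hnn
  linarith

lemma conv_mul_right {a b : ℕ → ℝ} (ha : ∀ i, 0 ≤ a i) (hb : ∀ i, 0 ≤ b i)
    (hbg : GLC b) {p r : ℕ} (hr : p < r) :
    conv a b p * b (r+1) ≤ conv a b (p+1) * b r := by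
  rw [conv, conv, Finset.sum_mul, Finset.sum_mul, Finset.sum_range_succ (n := p+1)]
  have h1 : ∀ i ∈ range (p+1), a i * b (p - i) * b (r+1) ≤ a i * b (p+1-i) * b r := by
    intro i hi
    simp only [Finset.mem_range] at hi
    have hglc := hbg (p - i) r (by omega)
    have e1 : p - i + 1 = p + 1 - i := by omega
    rw [e1] at hglc
    calc a i * b (p-i) * b (r+1) = a i * (b (p-i) * b (r+1)) := by ring
      _ ≤ a i * (b (p+1-i) * b r) := mul_le_mul_of_nonneg_left hglc (ha i)
      _ = a i * b (p+1-i) * b r := by ring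
  calc (∑ i ∈ range (p+1), a i * b (p-i) * b (r+1))
      ≤ ∑ i ∈ range (p+1), a i * b (p+1-i) * b r := Finset.sum_le_sum h1
    _ ≤ (∑ i ∈ range (p+1), a i * b (p+1-i) * b r) + a (p+1) * b (p+1-(p+1)) * b r := by
        have : 0 ≤ a (p+1) * b (p+1-(p+1)) * b r :=
          mul_nonneg (mul_nonneg (ha _) (hb _)) (hb _)
        linarith

lemma conv_GLC {a b : ℕ → ℝ} (ha : ∀ i, 0 ≤ a i) (hb : ∀ i, 0 ≤ b i)
    (hag : GLC a) (hbg : GLC b) : GLC (conv a b) := by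
  intro p q hpq
  obtain ⟨d, rfl⟩ : ∃ d, q = p + d := ⟨q - p, by omega⟩
  set X : ℕ → ℝ := a with hX
  set Y : ℕ → ℝ := fun i => a (i + d) with hY
  set S : ℕ → ℝ := fun i => b (p + 1 - i) with hS
  set T : ℕ → ℝ := fun i => if i ≤ p then b (p - i) else 0 with hT
  have hT0 : ∀ i, 0 ≤ T i := by
    intro i; rw [hT]; dsimp only; split_ifs; exacts [hb _, le_refl 0]
  have F1 : ∑ i ∈ range (p+2), X i * S i = conv a b (p+1) := rfl
  have F2 : ∑ i ∈ range (p+2), X i * T i = conv a b p := by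
    rw [Finset.sum_range_succ]
    have : T (p+1) = 0 := by rw [hT]; simp
    rw [this, mul_zero, add_zero, conv]
    refine Finset.sum_congr rfl fun i hi => ?_
    simp only [Finset.mem_range] at hi
    rw [hT]; dsimp only; rw [if_pos (by omega)]
  have split : ∀ m : ℕ, conv a b (p + d + m) =
      (∑ j ∈ range d, a j * b (p + d + m - j)) +
        ∑ i ∈ range (p + m + 1), a (i + d) * b (p + m - i) := by
    intro m
    have h1 := Finset.sum_Ico_consecutive (fun i => a i * b (p + d + m - i))
      (Nat.zero_le d) (show d ≤ p+d+m+1 by omega)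
    have h2 : ∑ i ∈ Ico d (p+d+m+1), a i * b (p+d+m-i)
        = ∑ i ∈ range (p+d+m+1-d), a (d+i) * b (p+d+m-(d+i)) := Finset.sum_Ico_eq_sum_range _ _ _
    have h3 : ∑ i ∈ range (p+d+m+1-d), a (d+i) * b (p+d+m-(d+i))
        = ∑ i ∈ range (p+m+1), a (i+d) * b (p+m-i) := by
      have e : p+d+m+1-d = p+m+1 := by omega
      rw [e]
      refine Finset.sum_congr rfl fun i hi => ?_
      simp only [Finset.mem_range] at hi
      rw [add_comm d i]
      congr 2
      omega
    calc conv a b (p+d+m) = ∑ i ∈ Ico 0 (p+d+m+1), a i * b (p+d+m-i) := by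
          rw [conv, Finset.range_eq_Ico]
      _ = (∑ i ∈ Ico 0 d, a i * b (p+d+m-i)) + ∑ i ∈ Ico d (p+d+m+1), a i * b (p+d+m-i) :=
          h1.symm
      _ = (∑ j ∈ range d, a j * b (p + d + m - j)) + ∑ i ∈ range (p+m+1), a (i+d) * b (p+m-i) := by
          rw [h2, h3, ← Finset.range_eq_Ico]
  have F3 : ∑ i ∈ range (p+2), Y i * S i =
      conv a b (p+d+1) - ∑ j ∈ range d, a j * b (p + d + 1 - j) := by
    rw [split 1]
    have : ∑ i ∈ range (p+1+1), a (i + d) * b (p + 1 - i) = ∑ i ∈ range (p+2), Y i * S i :=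
      Finset.sum_congr (by norm_num) fun i hi => rfl
    rw [this]; ring
  have F4 : ∑ i ∈ range (p+2), Y i * T i =
      conv a b (p+d) - ∑ j ∈ range d, a j * b (p + d - j) := by
    have s0 := split 0
    simp only [Nat.add_zero] at s0
    rw [s0]
    have : ∑ i ∈ range (p+1), a (i + d) * b (p - i) = ∑ i ∈ range (p+2), Y i * T i := by
      rw [Finset.sum_range_succ (n := p+1)]
      have hTz : T (p+1) = 0 := by rw [hT]; simp
      rw [hTz, mul_zero, add_zero]
      refine Finset.sum_congr rfl fun i hi => ?_
      simp only [Finset.mem_range] at hi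
      rw [hT, hY]; dsimp only; rw [if_pos (by omega)]
    rw [this]; ring
  have hcb : (∑ i ∈ range (p+2), X i * T i) * (∑ i ∈ range (p+2), Y i * S i) ≤
      (∑ i ∈ range (p+2), X i * S i) * (∑ i ∈ range (p+2), Y i * T i) := by
    apply cb
    have main : ∀ i j : ℕ, i ≤ j → j ≤ p + 1 →
        0 ≤ (X i * Y j - X j * Y i) * (S i * T j - S j * T i) := by
      intro i j hij hj
      have hf1 : X i * Y j - X j * Y i ≤ 0 := by
        rw [hX, hY]; dsimp only
        have := glc_iter hag d i j hij
        linarith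
      have hf2 : S i * T j - S j * T i ≤ 0 := by
        rw [hS, hT]; dsimp only
        rcases le_or_gt j p with hjp | hjp
        · rw [if_pos hjp, if_pos (by omega)]
          have hglc := hbg (p - j) (p - i) (by omega)
          have e1 : p - j + 1 = p + 1 - j := by omega
          have e2 : p - i + 1 = p + 1 - i := by omega
          rw [e1, e2] at hglc
          nlinarith [hglc]
        · rw [if_neg (by omega)]
          have : (0:ℝ) ≤ b (p + 1 - j) * (if i ≤ p then b (p - i) else 0) := by
            split_ifs
            exacts [mul_nonneg (hb _) (hb _), by simp]
          nlinarith [this]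
      nlinarith [mul_nonneg (neg_nonneg.2 hf1) (neg_nonneg.2 hf2)]
    intro i hi j hj
    simp only [Finset.mem_range] at hi hj
    rcases le_total i j with h | h
    · exact main i j h (by omega)
    · have := main j i h (by omega)
      nlinarith [this]
  rw [F1, F2, F3, F4] at hcb
  have extra : 0 ≤ ∑ j ∈ range d,
      a j * (conv a b (p+1) * b (p + d - j) - conv a b p * b (p + d + 1 - j)) := by
    refine Finset.sum_nonneg fun j hj => ?_
    simp only [Finset.mem_range] at hj
    have h1 : conv a b p * b (p + d - j + 1) ≤ conv a b (p+1) * b (p + d - j) :=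
      conv_mul_right ha hb hbg (by omega)
    have e : p + d - j + 1 = p + d + 1 - j := by omega
    rw [e] at h1
    exact mul_nonneg (ha j) (by linarith)
  have expand : ∑ j ∈ range d,
      a j * (conv a b (p+1) * b (p + d - j) - conv a b p * b (p + d + 1 - j))
      = conv a b (p+1) * (∑ j ∈ range d, a j * b (p + d - j))
        - conv a b p * (∑ j ∈ range d, a j * b (p + d + 1 - j)) := by
    rw [Finset.mul_sum, Finset.mul_sum, ← Finset.sum_sub_distrib]
    exact Finset.sum_congr rfl fun j _ => by ring
  rw [expand] at extra
  have goal' : conv a b p * conv a b (p + d + 1) ≤ conv a b (p+1) * conv a b (p+d) := by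
    nlinarith [hcb, extra]
  have e : p + d + 1 = p + (d + 1) := by ring
  calc conv a b p * conv a b (p + d + 1) = conv a b p * conv a b (p + d + 1) := rfl
    _ ≤ conv a b (p+1) * conv a b (p+d) := goal'

noncomputable def eslice (n k : ℕ) : Finset (Fin n → ℕ) :=
  (Fintype.piFinset fun _ : Fin n => Finset.range (k+1)).filter (fun x => ∑ i, x i = k)

lemma mem_eslice {n k : ℕ} {x : Fin n → ℕ} : x ∈ eslice n k ↔ ∑ i, x i = k := by
  constructor
  · intro h
    exact (Finset.mem_filter.1 h).2
  · intro h
    refine Finset.mem_filter.2 ⟨Fintype.mem_piFinset.2 fun i => ?_, h⟩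
    rw [Finset.mem_range]
    have : x i ≤ ∑ j, x j := Finset.single_le_sum (fun j _ => Nat.zero_le _) (Finset.mem_univ i)
    omega

lemma tsum_slice (n k : ℕ) (g : (Fin n → ℕ) → ℝ) :
    ∑' x : Fin n → ℕ, (if (∑ i, x i) = k then g x else 0) = ∑ x ∈ eslice n k, g x := by
  rw [tsum_eq_sum (s := eslice n k) (fun x hx => if_neg fun hc => hx (mem_eslice.2 hc))]
  exact Finset.sum_congr rfl fun x hx => if_pos (mem_eslice.1 hx)

lemma peel {n : ℕ} (g : (Fin (n+1) → ℕ) → ℝ) (K : ℕ) :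
    ∑ x ∈ eslice (n+1) K, g x =
      ∑ t ∈ Finset.range (K+1), ∑ y ∈ eslice n (K - t), g (Fin.snoc y t) := by
  rw [Finset.sum_sigma' (Finset.range (K+1)) (fun t => eslice n (K - t))
    (fun t y => g (Fin.snoc y t))]
  refine Finset.sum_nbij' (fun x => (⟨x (Fin.last n), Fin.init x⟩ : Σ _ : ℕ, (Fin n → ℕ)))
    (fun p => Fin.snoc p.2 p.1) ?_ ?_ ?_ ?_ ?_
  · intro x hx
    have hsum := mem_eslice.1 hx
    rw [Fin.sum_univ_castSucc] at hsum
    simp only [Finset.mem_sigma, Finset.mem_range]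
    refine ⟨by omega, mem_eslice.2 ?_⟩
    show (∑ i : Fin n, x (Fin.castSucc i)) = K - x (Fin.last n)
    omega
  · intro p hp
    obtain ⟨ht, hy⟩ := Finset.mem_sigma.1 hp
    rw [Finset.mem_range] at ht
    have hsy := mem_eslice.1 hy
    refine mem_eslice.2 ?_
    rw [Fin.sum_univ_castSucc]
    simp only [Fin.snoc_castSucc, Fin.snoc_last]
    omega
  · intro x hx
    exact Fin.snoc_init_self x
  · intro p hp
    simp only [Sigma.ext_iff]
    constructor
    · simp [Fin.snoc_last]
    · simp [Fin.init_snoc]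
  · intro x hx
    rw [Fin.snoc_init_self x]

lemma prod_snoc {n : ℕ} (ν : Fin (n+1) → ℕ → ℝ) (y : Fin n → ℕ) (t : ℕ) :
    (∏ i, ν i ((Fin.snoc y t : Fin (n+1) → ℕ) i)) =
      (∏ i : Fin n, ν (Fin.castSucc i) (y i)) * ν (Fin.last n) t := by
  rw [Fin.prod_univ_castSucc]
  simp [Fin.snoc_castSucc, Fin.snoc_last]

lemma snoc_mono {n : ℕ} {y y' : Fin n → ℕ} {t t' : ℕ} (h1 : y ≤ y') (h2 : t ≤ t') :
    (Fin.snoc y t : Fin (n+1) → ℕ) ≤ Fin.snoc y' t' := by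
  intro i
  refine Fin.lastCases ?_ ?_ i
  · simp only [Fin.snoc_last]; exact h2
  · intro j
    simp only [Fin.snoc_castSucc]
    exact h1 j

noncomputable def Bs (n : ℕ) (ν : Fin n → ℕ → ℝ) (k : ℕ) : ℝ :=
  ∑ x ∈ eslice n k, ∏ i, ν i (x i)

lemma Bs_nonneg {n : ℕ} {ν : Fin n → ℕ → ℝ} (h : ∀ i s, 0 ≤ ν i s) (k : ℕ) :
    0 ≤ Bs n ν k :=
  Finset.sum_nonneg fun x _ => Finset.prod_nonneg fun i _ => h i (x i)

lemma Bs_succ {n : ℕ} (ν : Fin (n+1) → ℕ → ℝ) :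
    Bs (n+1) ν = conv (ν (Fin.last n)) (Bs n (fun i => ν (Fin.castSucc i))) := by
  funext k
  rw [Bs, peel, conv]
  refine Finset.sum_congr rfl fun t ht => ?_
  rw [Bs, Finset.mul_sum]
  refine Finset.sum_congr rfl fun y hy => ?_
  rw [prod_snoc]
  ring

lemma Bs_zero (ν : Fin 0 → ℕ → ℝ) (k : ℕ) : Bs 0 ν k = if k = 0 then 1 else 0 := by
  rcases Nat.eq_zero_or_pos k with rfl | hk
  · rw [if_pos rfl, Bs]
    have h1 : eslice 0 0 = {(fun i => i.elim0 : Fin 0 → ℕ)} := by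
      ext x
      simp only [Finset.mem_singleton]
      rw [mem_eslice]
      constructor
      · intro _; funext i; exact i.elim0
      · intro _; simp
    rw [h1]
    simp
  · rw [if_neg (by omega), Bs]
    have h1 : eslice 0 k = ∅ := by
      ext x
      simp only [Finset.notMem_empty, iff_false]
      intro hx
      have := mem_eslice.1 hx
      simp at this
      omega
    rw [h1]
    simp

lemma delta_GLC : GLC (fun k : ℕ => if k = 0 then (1:ℝ) else 0) := by
  intro p q hpq
  simp only []
  rw [if_neg (by omega : ¬ q + 1 = 0)]
  have h1 : (0:ℝ) ≤ (if p + 1 = 0 then (1:ℝ) else 0) * (if q = 0 then (1:ℝ) else 0) := by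
    split_ifs <;> norm_num
  simpa using h1

lemma delta_DP : DP (fun k : ℕ => if k = 0 then (1:ℝ) else 0) := by
  intro x y hxy hy
  have hy' : (0:ℝ) < if y = 0 then 1 else 0 := hy
  have : y = 0 := by by_contra h; rw [if_neg h] at hy'; linarith
  have hx : x = 0 := by omega
  show (0:ℝ) < if x = 0 then 1 else 0
  rw [if_pos hx]; norm_num

lemma Bs_GLC {n : ℕ} {ν : Fin n → ℕ → ℝ} (h0 : ∀ i s, 0 ≤ ν i s) (hg : ∀ i, GLC (ν i)) :
    GLC (Bs n ν) := by
  induction n with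
  | zero =>
    have : Bs 0 ν = fun k => if k = 0 then (1:ℝ) else 0 := funext (Bs_zero ν)
    rw [this]; exact delta_GLC
  | succ n ih =>
    rw [Bs_succ]
    exact conv_GLC (fun s => h0 _ s)
      (fun m => Bs_nonneg (fun i s => h0 _ s) m)
      (hg _) (ih (fun i s => h0 _ s) (fun i => hg _))

lemma Bs_DP {n : ℕ} {ν : Fin n → ℕ → ℝ} (h0 : ∀ i s, 0 ≤ ν i s) (hdp : ∀ i, DP (ν i)) :
    DP (Bs n ν) := by
  induction n with
  | zero =>
    have : Bs 0 ν = fun k => if k = 0 then (1:ℝ) else 0 := funext (Bs_zero ν)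
    rw [this]; exact delta_DP
  | succ n ih =>
    rw [Bs_succ]
    exact conv_DP (fun s => h0 _ s)
      (fun m => Bs_nonneg (fun i s => h0 _ s) m)
      (hdp _) (ih (fun i s => h0 _ s) (fun i => hdp _))

noncomputable def Wf (ν β : ℕ → ℝ) (K s : ℕ) : ℝ := if s ≤ K then ν s * β (K - s) else 0

lemma Wf_nonneg {ν β : ℕ → ℝ} (hν : ∀ s, 0 ≤ ν s) (hβ : ∀ m, 0 ≤ β m) (K s : ℕ) :
    0 ≤ Wf ν β K s := by
  rw [Wf]; split_ifs
  exacts [mul_nonneg (hν s) (hβ _), le_refl 0]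

lemma sum_antisym (S : Finset ℕ) (F : ℕ → ℕ → ℝ) (h : ∀ s t, F s t = - F t s) :
    ∑ s ∈ S, ∑ t ∈ S, F s t = 0 := by
  have h2 : ∑ s ∈ S, ∑ t ∈ S, F s t = ∑ t ∈ S, ∑ s ∈ S, F s t := Finset.sum_comm
  have h3 : ∑ t ∈ S, ∑ s ∈ S, F s t = - ∑ s ∈ S, ∑ t ∈ S, F s t := by
    rw [← Finset.sum_neg_distrib]
    refine Finset.sum_congr rfl fun t _ => ?_
    rw [← Finset.sum_neg_distrib]
    exact Finset.sum_congr rfl fun s _ => h s t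
  have := h2.trans h3
  linarith

lemma Wf_mono {ν β : ℕ → ℝ} (hν : ∀ s, 0 ≤ ν s) (hβ : ∀ m, 0 ≤ β m) (hβg : GLC β)
    {k s t : ℕ} (hts : t ≤ s) (hs : s ≤ k+1) :
    Wf ν β k s * Wf ν β (k+1) t ≤ Wf ν β (k+1) s * Wf ν β k t := by
  rcases le_or_gt s k with hsk | hsk
  · rw [Wf, Wf, Wf, Wf, if_pos hsk, if_pos (by omega : s ≤ k+1),
      if_pos (by omega : t ≤ k), if_pos (by omega : t ≤ k+1)]
    have hglc := hβg (k - s) (k - t) (by omega)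
    have e1 : k - s + 1 = k + 1 - s := by omega
    have e2 : k - t + 1 = k + 1 - t := by omega
    rw [e1, e2] at hglc
    have hnn : 0 ≤ ν s * ν t := mul_nonneg (hν s) (hν t)
    nlinarith [hglc]
  · have : Wf ν β k s = 0 := by rw [Wf, if_neg (by omega)]
    rw [this, zero_mul]
    exact mul_nonneg (Wf_nonneg hν hβ _ _) (Wf_nonneg hν hβ _ _)

lemma tail_dom (ν β : ℕ → ℝ) (hν : ∀ s, 0 ≤ ν s) (hβ : ∀ m, 0 ≤ β m) (hβg : GLC β)
    (k j : ℕ) :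
    (∑ s ∈ Ico j (k+2), Wf ν β k s) * (∑ s ∈ Ico 0 (k+2), Wf ν β (k+1) s) ≤
      (∑ s ∈ Ico j (k+2), Wf ν β (k+1) s) * (∑ s ∈ Ico 0 (k+2), Wf ν β k s) := by
  rcases le_or_gt j (k+2) with hj | hj
  · have expand :
        (∑ s ∈ Ico j (k+2), Wf ν β (k+1) s) * (∑ s ∈ Ico 0 (k+2), Wf ν β k s)
          - (∑ s ∈ Ico j (k+2), Wf ν β k s) * (∑ s ∈ Ico 0 (k+2), Wf ν β (k+1) s)
        = ∑ s ∈ Ico j (k+2), ∑ t ∈ Ico 0 (k+2),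
            (Wf ν β (k+1) s * Wf ν β k t - Wf ν β k s * Wf ν β (k+1) t) := by
      rw [Finset.sum_mul_sum, Finset.sum_mul_sum, ← Finset.sum_sub_distrib]
      exact Finset.sum_congr rfl fun s _ => (Finset.sum_sub_distrib _ _).symm
    have hsplit : ∀ s : ℕ, ∑ t ∈ Ico 0 (k+2),
          (Wf ν β (k+1) s * Wf ν β k t - Wf ν β k s * Wf ν β (k+1) t)
        = (∑ t ∈ Ico 0 j, (Wf ν β (k+1) s * Wf ν β k t - Wf ν β k s * Wf ν β (k+1) t))
          + ∑ t ∈ Ico j (k+2), (Wf ν β (k+1) s * Wf ν β k t - Wf ν β k s * Wf ν β (k+1) t) :=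
      fun s => (Finset.sum_Ico_consecutive _ (Nat.zero_le j) hj).symm
    have hzero : ∑ s ∈ Ico j (k+2), ∑ t ∈ Ico j (k+2),
        (Wf ν β (k+1) s * Wf ν β k t - Wf ν β k s * Wf ν β (k+1) t) = 0 := by
      apply sum_antisym
      intro s t; ring
    have hpos : 0 ≤ ∑ s ∈ Ico j (k+2), ∑ t ∈ Ico 0 j,
        (Wf ν β (k+1) s * Wf ν β k t - Wf ν β k s * Wf ν β (k+1) t) := by
      refine Finset.sum_nonneg fun s hs => Finset.sum_nonneg fun t ht => ?_
      rw [Finset.mem_Ico] at hs ht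
      have := Wf_mono hν hβ hβg (k := k) (s := s) (t := t) (by omega) (by omega)
      linarith
    have : 0 ≤ (∑ s ∈ Ico j (k+2), Wf ν β (k+1) s) * (∑ s ∈ Ico 0 (k+2), Wf ν β k s)
        - (∑ s ∈ Ico j (k+2), Wf ν β k s) * (∑ s ∈ Ico 0 (k+2), Wf ν β (k+1) s) := by
      rw [expand, Finset.sum_congr rfl (fun s _ => hsplit s), Finset.sum_add_distrib, hzero,
        add_zero]
      exact hpos
    linarith
  · have he : Ico j (k+2) = ∅ := Finset.Ico_eq_empty (by omega)
    rw [he]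
    simp

lemma Wf_mirror (ν β : ℕ → ℝ) (k : ℕ) {K c : ℕ} (hc : c ≤ K+1) (hK : K ≤ k+1) :
    ∑ s ∈ range c, Wf ν β K s = ∑ m ∈ Ico (K+1-c) (k+2), Wf β ν K m := by
  have h1 : ∑ m ∈ Ico (K+1-c) (k+2), Wf β ν K m
      = (∑ m ∈ Ico (K+1-c) (K+1), Wf β ν K m) + ∑ m ∈ Ico (K+1) (k+2), Wf β ν K m :=
    (Finset.sum_Ico_consecutive _ (by omega) (by omega)).symm
  have h2 : ∑ m ∈ Ico (K+1) (k+2), Wf β ν K m = 0 := by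
    refine Finset.sum_eq_zero fun m hm => ?_
    rw [Finset.mem_Ico] at hm
    rw [Wf, if_neg (by omega)]
  have h3 : ∑ s ∈ range c, Wf ν β K s = ∑ m ∈ Ico (K+1-c) (K+1), Wf β ν K m := by
    refine Finset.sum_nbij' (fun s => K - s) (fun m => K - m) ?_ ?_ ?_ ?_ ?_
    · intro s hs
      rw [Finset.mem_range] at hs
      rw [Finset.mem_Ico]
      omega
    · intro m hm
      rw [Finset.mem_Ico] at hm
      rw [Finset.mem_range]
      omega
    · intro s hs
      rw [Finset.mem_range] at hs
      omega
    · intro m hm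
      rw [Finset.mem_Ico] at hm
      omega
    · intro s hs
      rw [Finset.mem_range] at hs
      rw [Wf, Wf, if_pos (by omega : s ≤ K), if_pos (by omega : K - s ≤ K)]
      have e : K - (K - s) = s := by omega
      rw [e]
      ring
  rw [h3, h1, h2, add_zero]

lemma twoDim (ν β : ℕ → ℝ) (α : ℕ → ℕ → ℝ)
    (hν0 : ∀ s, 0 ≤ ν s) (hβ0 : ∀ m, 0 ≤ β m)
    (hνg : GLC ν) (hβg : GLC β) (hβdp : DP β)
    (hc3 : ∀ t m, α t m * β (m+1) ≤ α t (m+1) * β m)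
    (hc4 : ∀ t m, α t m ≤ α (t+1) m)
    (hc5 : ∀ t m, β m = 0 → α t m = 0) (k : ℕ) :
    (∑ s ∈ range (k+1), ν s * α s (k-s)) * (∑ s ∈ range (k+2), ν s * β (k+1-s)) ≤
      (∑ s ∈ range (k+2), ν s * α s (k+1-s)) * (∑ s ∈ range (k+1), ν s * β (k-s)) := by
  classical
  set G : ℕ → ℝ := fun j => ∑ s ∈ Ico j (k+2), Wf ν β (k+1) s with hG
  set E : ℕ → ℝ := fun j => ∑ s ∈ Ico j (k+2), Wf ν β k s with hE
  have hEnn : ∀ j, 0 ≤ E j := fun j =>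
    Finset.sum_nonneg fun s _ => Wf_nonneg hν0 hβ0 _ _
  have hGnn : ∀ j, 0 ≤ G j := fun j =>
    Finset.sum_nonneg fun s _ => Wf_nonneg hν0 hβ0 _ _
  have hGE : ∀ j, E j * G 0 ≤ G j * E 0 := fun j => tail_dom ν β hν0 hβ0 hβg k j
  have hW0top : Wf ν β k (k+1) = 0 := by rw [Wf, if_neg (by omega)]
  have hE0' : E 0 = ∑ s ∈ range (k+2), Wf ν β k s := by
    rw [hE]; dsimp only; rw [Finset.range_eq_Ico]
  have hG0' : G 0 = ∑ s ∈ range (k+2), Wf ν β (k+1) s := by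
    rw [hG]; dsimp only; rw [Finset.range_eq_Ico]
  have hEmir : E 0 = ∑ m ∈ Ico 0 (k+2), Wf β ν k m := by
    have h1 : E 0 = ∑ s ∈ range (k+1), Wf ν β k s := by
      rw [hE0', Finset.sum_range_succ, hW0top, add_zero]
    rw [h1, Wf_mirror ν β k (c := k+1) (K := k) le_rfl (by omega)]
    have e : k + 1 - (k+1) = 0 := by omega
    rw [e]
  have hGmir : G 0 = ∑ m ∈ Ico 0 (k+2), Wf β ν (k+1) m := by
    rw [hG0', Wf_mirror ν β k (c := k+2) (K := k+1) le_rfl (by omega)]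
    have e : k + 1 + 1 - (k+2) = 0 := by omega
    rw [e]
  have hEempty : ∀ s, k+2 ≤ s → E s = 0 := fun s hs => by
    rw [hE]; dsimp only; rw [Finset.Ico_eq_empty (by omega)]; simp
  have hGempty : ∀ s, k+2 ≤ s → G s = 0 := fun s hs => by
    rw [hG]; dsimp only; rw [Finset.Ico_eq_empty (by omega)]; simp
  have hEG : ∀ j, G (j+1) * E 0 ≤ E j * G 0 := by
    intro j
    rcases le_or_gt j (k+1) with hj | hj
    · have hsplitE : (∑ s ∈ range j, Wf ν β k s) + E j = E 0 := by
        rw [hE]; dsimp only; rw [Finset.range_eq_Ico]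
        exact Finset.sum_Ico_consecutive _ (Nat.zero_le j) (by omega)
      have hsplitG : (∑ s ∈ range (j+1), Wf ν β (k+1) s) + G (j+1) = G 0 := by
        rw [hG]; dsimp only; rw [Finset.range_eq_Ico]
        exact Finset.sum_Ico_consecutive _ (Nat.zero_le (j+1)) (by omega)
      have hm1 : ∑ s ∈ range j, Wf ν β k s = ∑ m ∈ Ico (k+1-j) (k+2), Wf β ν k m :=
        Wf_mirror ν β k (c := j) (K := k) (by omega) (by omega)
      have hm2 : ∑ s ∈ range (j+1), Wf ν β (k+1) s
          = ∑ m ∈ Ico (k+1-j) (k+2), Wf β ν (k+1) m := by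
        rw [Wf_mirror ν β k (c := j+1) (K := k+1) (by omega) (by omega)]
        have e : k + 1 + 1 - (j+1) = k + 1 - j := by omega
        rw [e]
      have hTD := tail_dom β ν hβ0 hν0 hνg k (k+1-j)
      rw [← hm1, ← hm2, ← hEmir, ← hGmir] at hTD
      have h1 : (∑ s ∈ range j, Wf ν β k s) * G 0 = E 0 * G 0 - E j * G 0 := by
        rw [show (∑ s ∈ range j, Wf ν β k s) = E 0 - E j from by linarith]; ring
      have h2 : (∑ s ∈ range (j+1), Wf ν β (k+1) s) * E 0 = G 0 * E 0 - G (j+1) * E 0 := by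
        rw [show (∑ s ∈ range (j+1), Wf ν β (k+1) s) = G 0 - G (j+1) from by linarith]; ring
      rw [h1, h2] at hTD
      linarith
    · have hgz : G (j+1) = 0 := hGempty _ (by omega)
      rw [hgz, zero_mul]
      exact mul_nonneg (hEnn j) (hGnn 0)
  set lam : ℕ → ℝ := fun s => E s * G 0 - G (s+1) * E 0 with hlam
  set mu : ℕ → ℝ := fun s => G s * E 0 - E s * G 0 with hmu
  have hlamnn : ∀ s, 0 ≤ lam s := fun s => by
    rw [hlam]; dsimp only; linarith [hEG s]
  have hmunn : ∀ s, 0 ≤ mu s := fun s => by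
    rw [hmu]; dsimp only; linarith [hGE s]
  have hmu0 : mu 0 = 0 := by rw [hmu]; dsimp only; ring
  have hEtop : E (k+1) = 0 := by
    rw [hE]; dsimp only
    rw [show Ico (k+1) (k+2) = {k+1} from Nat.Ico_succ_singleton (k+1)]
    rw [Finset.sum_singleton, hW0top]
  have hlamtop : lam (k+1) = 0 := by
    rw [hlam]; dsimp only; rw [hEtop, hGempty (k+2) le_rfl]; ring
  have hpeelG : ∀ s, s ≤ k+1 → G s = Wf ν β (k+1) s + G (s+1) := fun s hs => by
    rw [hG]; dsimp only; exact Finset.sum_eq_sum_Ico_succ_bot (by omega) _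
  have hpeelE : ∀ s, s ≤ k+1 → E s = Wf ν β k s + E (s+1) := fun s hs => by
    rw [hE]; dsimp only; exact Finset.sum_eq_sum_Ico_succ_bot (by omega) _
  have hlm : ∀ s, s ≤ k+1 → lam s + mu s = Wf ν β (k+1) s * E 0 := fun s hs => by
    rw [hlam, hmu]; dsimp only; rw [hpeelG s hs]; ring
  have hlm2 : ∀ s, s ≤ k+1 → lam s + mu (s+1) = Wf ν β k s * G 0 := fun s hs => by
    rw [hlam, hmu]; dsimp only; rw [hpeelE s hs]; ring
  set gfun : ℕ → ℝ :=
    fun s => if 0 < β (k+1-s) ∧ s ≤ k+1 then α s (k+1-s) / β (k+1-s) else 0 with hgfun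
  set efun : ℕ → ℝ :=
    fun s => if 0 < β (k-s) ∧ s ≤ k then α s (k-s) / β (k-s) else 0 with hefun
  have hgW : ∀ s, Wf ν β (k+1) s * gfun s
      = (if s ≤ k+1 then ν s * α s (k+1-s) else 0) := by
    intro s
    rw [hgfun, Wf]; dsimp only
    by_cases h1 : s ≤ k+1
    · rw [if_pos h1, if_pos h1]
      by_cases h2 : 0 < β (k+1-s)
      · rw [if_pos ⟨h2, h1⟩]
        field_simp
      · have hb0 : β (k+1-s) = 0 := le_antisymm (not_lt.1 h2) (hβ0 _)
        rw [if_neg (by tauto), mul_zero, hc5 s (k+1-s) hb0, mul_zero]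
    · rw [if_neg h1, if_neg h1, zero_mul]
  have heW : ∀ s, Wf ν β k s * efun s = (if s ≤ k then ν s * α s (k-s) else 0) := by
    intro s
    rw [hefun, Wf]; dsimp only
    by_cases h1 : s ≤ k
    · rw [if_pos h1, if_pos h1]
      by_cases h2 : 0 < β (k-s)
      · rw [if_pos ⟨h2, h1⟩]
        field_simp
      · have hb0 : β (k-s) = 0 := le_antisymm (not_lt.1 h2) (hβ0 _)
        rw [if_neg (by tauto), mul_zero, hc5 s (k-s) hb0, mul_zero]
    · rw [if_neg h1, if_neg h1, zero_mul]
  have key1 : ∀ s, 0 ≤ lam s * (gfun s - efun s) := by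
    intro s
    rcases eq_or_lt_of_le (hlamnn s) with h0 | hpos
    · rw [← h0, zero_mul]
    · have hsk : s ≤ k := by
        by_contra hs
        push_neg at hs
        have : s = k+1 ∨ k+2 ≤ s := by omega
        rcases this with rfl | hbig
        · linarith [hlamtop]
        · have : lam s = 0 := by
            rw [hlam]; dsimp only
            rw [hEempty s (by omega), hGempty (s+1) (by omega)]; ring
          linarith
      have hWpos : 0 < Wf ν β (k+1) s * E 0 := by
        rw [← hlm s (by omega)]; linarith [hmunn s]
      have hW1 : 0 < Wf ν β (k+1) s := by
        rcases lt_or_ge 0 (Wf ν β (k+1) s) with h | h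
        · exact h
        · have hz : Wf ν β (k+1) s = 0 := le_antisymm h (Wf_nonneg hν0 hβ0 _ _)
          rw [hz, zero_mul] at hWpos; linarith
      rw [Wf, if_pos (by omega : s ≤ k+1)] at hW1
      have hβ1 : 0 < β (k+1-s) := by
        by_contra h; push_neg at h; nlinarith [hν0 s]
      have hβ2 : 0 < β (k-s) := hβdp _ _ (by omega) hβ1
      rw [hgfun, hefun]; dsimp only
      rw [if_pos ⟨hβ1, by omega⟩, if_pos ⟨hβ2, hsk⟩]
      have hmle : α s (k-s) / β (k-s) ≤ α s (k+1-s) / β (k+1-s) := by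
        rw [div_le_div_iff₀ hβ2 hβ1]
        have h3 := hc3 s (k-s)
        have e1 : k-s+1 = k+1-s := by omega
        rw [e1] at h3
        exact h3
      exact mul_nonneg (le_of_lt hpos) (by linarith)
  have key2 : ∀ s, 0 ≤ mu s * (gfun s - efun (s-1)) := by
    intro s
    rcases Nat.eq_zero_or_pos s with rfl | hs1
    · rw [hmu0, zero_mul]
    rcases eq_or_lt_of_le (hmunn s) with h0 | hpos
    · rw [← h0, zero_mul]
    · have hsk : s ≤ k+1 := by
        by_contra hs
        push_neg at hs
        have : mu s = 0 := by
          rw [hmu]; dsimp only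
          rw [hEempty s (by omega), hGempty s (by omega)]; ring
        linarith
      have hWpos : 0 < Wf ν β (k+1) s * E 0 := by
        rw [← hlm s hsk]; linarith [hlamnn s]
      have hW1 : 0 < Wf ν β (k+1) s := by
        rcases lt_or_ge 0 (Wf ν β (k+1) s) with h | h
        · exact h
        · have hz : Wf ν β (k+1) s = 0 := le_antisymm h (Wf_nonneg hν0 hβ0 _ _)
          rw [hz, zero_mul] at hWpos; linarith
      rw [Wf, if_pos hsk] at hW1
      have hβ1 : 0 < β (k+1-s) := by
        by_contra h; push_neg at h; nlinarith [hν0 s]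
      rw [hgfun, hefun]; dsimp only
      have e1 : k - (s-1) = k+1-s := by omega
      rw [if_pos ⟨hβ1, hsk⟩, e1, if_pos ⟨hβ1, by omega⟩]
      have h4 := hc4 (s-1) (k+1-s)
      rw [show s-1+1 = s from by omega] at h4
      have : α (s-1) (k+1-s) / β (k+1-s) ≤ α s (k+1-s) / β (k+1-s) :=
        (div_le_div_iff_of_pos_right hβ1).2 h4
      exact mul_nonneg (le_of_lt hpos) (by linarith)
  have e0 : (∑ s ∈ range (k+2), lam s * (gfun s - efun s))
      + (∑ s ∈ range (k+2), mu s * (gfun s - efun (s-1)))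
      = ∑ s ∈ range (k+2),
          ((lam s + mu s) * gfun s - lam s * efun s - mu s * efun (s-1)) := by
    rw [← Finset.sum_add_distrib]
    exact Finset.sum_congr rfl fun s _ => by ring
  have e1 : ∑ s ∈ range (k+2), (lam s + mu s) * gfun s
      = (∑ s ∈ range (k+2), ν s * α s (k+1-s)) * E 0 := by
    have h : ∀ s ∈ range (k+2), (lam s + mu s) * gfun s = (ν s * α s (k+1-s)) * E 0 := by
      intro s hs; rw [Finset.mem_range] at hs
      rw [hlm s (by omega)]
      calc Wf ν β (k+1) s * E 0 * gfun s = (Wf ν β (k+1) s * gfun s) * E 0 := by ring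
        _ = (if s ≤ k+1 then ν s * α s (k+1-s) else 0) * E 0 := by rw [hgW s]
        _ = (ν s * α s (k+1-s)) * E 0 := by rw [if_pos (by omega : s ≤ k+1)]
    rw [Finset.sum_congr rfl h, ← Finset.sum_mul]
  have e2 : ∑ s ∈ range (k+2), lam s * efun s = ∑ s ∈ range (k+1), lam s * efun s := by
    rw [Finset.sum_range_succ, hlamtop, zero_mul, add_zero]
  have e3 : ∑ s ∈ range (k+2), mu s * efun (s-1)
      = ∑ s ∈ range (k+1), mu (s+1) * efun s := by
    rw [Finset.sum_range_succ' (fun s => mu s * efun (s-1)) (k+1), hmu0, zero_mul, add_zero]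
    exact Finset.sum_congr rfl fun s _ => by rw [Nat.add_sub_cancel]
  have e4 : (∑ s ∈ range (k+1), lam s * efun s) + (∑ s ∈ range (k+1), mu (s+1) * efun s)
      = (∑ s ∈ range (k+1), ν s * α s (k-s)) * G 0 := by
    rw [← Finset.sum_add_distrib]
    have h : ∀ s ∈ range (k+1), lam s * efun s + mu (s+1) * efun s
        = (ν s * α s (k-s)) * G 0 := by
      intro s hs; rw [Finset.mem_range] at hs
      calc lam s * efun s + mu (s+1) * efun s = (lam s + mu (s+1)) * efun s := by ring
        _ = (Wf ν β k s * G 0) * efun s := by rw [hlm2 s (by omega)]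
        _ = (Wf ν β k s * efun s) * G 0 := by ring
        _ = (if s ≤ k then ν s * α s (k-s) else 0) * G 0 := by rw [heW s]
        _ = (ν s * α s (k-s)) * G 0 := by rw [if_pos (by omega : s ≤ k)]
    rw [Finset.sum_congr rfl h, ← Finset.sum_mul]
  have hid : (∑ s ∈ range (k+2), lam s * (gfun s - efun s))
      + (∑ s ∈ range (k+2), mu s * (gfun s - efun (s-1)))
      = (∑ s ∈ range (k+2), ν s * α s (k+1-s)) * E 0
        - (∑ s ∈ range (k+1), ν s * α s (k-s)) * G 0 := by
    rw [e0]
    rw [Finset.sum_sub_distrib, Finset.sum_sub_distrib, e1, e2, e3]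
    linarith [e4]
  have hsum : 0 ≤ (∑ s ∈ range (k+2), lam s * (gfun s - efun s))
      + (∑ s ∈ range (k+2), mu s * (gfun s - efun (s-1))) :=
    add_nonneg (Finset.sum_nonneg fun s _ => key1 s) (Finset.sum_nonneg fun s _ => key2 s)
  rw [hid] at hsum
  have hBk : (∑ s ∈ range (k+1), ν s * β (k-s)) = E 0 := by
    rw [hE0', Finset.sum_range_succ (f := fun s => Wf ν β k s), hW0top, add_zero]
    refine Finset.sum_congr rfl fun s hs => ?_
    rw [Finset.mem_range] at hs
    rw [Wf, if_pos (by omega : s ≤ k)]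
  have hBk1 : (∑ s ∈ range (k+2), ν s * β (k+1-s)) = G 0 := by
    rw [hG0']
    refine Finset.sum_congr rfl fun s hs => ?_
    rw [Finset.mem_range] at hs
    rw [Wf, if_pos (by omega : s ≤ k+1)]
  rw [hBk, hBk1]
  linarith

lemma cross : ∀ (n : ℕ) (ν : Fin n → ℕ → ℝ), (∀ i s, 0 ≤ ν i s) → (∀ i, GLC (ν i)) →
    (∀ i, DP (ν i)) → ∀ (f : (Fin n → ℕ) → ℝ), Monotone f → ∀ k : ℕ,
    (∑ x ∈ eslice n k, f x * ∏ i, ν i (x i)) * Bs n ν (k+1) ≤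
      (∑ x ∈ eslice n (k+1), f x * ∏ i, ν i (x i)) * Bs n ν k := by
  intro n
  induction n with
  | zero =>
    intro ν _ _ _ f _ k
    have h1 : eslice 0 (k+1) = ∅ := by
      ext x
      simp only [Finset.notMem_empty, iff_false]
      intro hx
      have := mem_eslice.1 hx
      rw [Fin.sum_univ_zero] at this
      omega
    have h2 : Bs 0 ν (k+1) = 0 := by rw [Bs_zero, if_neg (by omega)]
    rw [h2, mul_zero, h1, Finset.sum_empty, zero_mul]
  | succ n ih =>
    intro ν hnn hg hdp f hf k
    have hA : ∀ K : ℕ, (∑ x ∈ eslice (n+1) K, f x * ∏ i, ν i (x i))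
        = ∑ t ∈ range (K+1), ν (Fin.last n) t *
            (∑ y ∈ eslice n (K-t), f (Fin.snoc y t) * ∏ i, ν (Fin.castSucc i) (y i)) := by
      intro K
      rw [peel (fun x => f x * ∏ i, ν i (x i)) K]
      refine Finset.sum_congr rfl fun t ht => ?_
      rw [Finset.mul_sum]
      refine Finset.sum_congr rfl fun y hy => ?_
      rw [prod_snoc]
      ring
    have hB : ∀ K : ℕ, Bs (n+1) ν K = ∑ t ∈ range (K+1),
        ν (Fin.last n) t * Bs n (fun i => ν (Fin.castSucc i)) (K-t) := by
      intro K
      rw [Bs_succ]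
      rfl
    rw [hA k, hA (k+1), hB k, hB (k+1)]
    refine twoDim (ν (Fin.last n)) (Bs n (fun i => ν (Fin.castSucc i)))
      (fun t m => ∑ y ∈ eslice n m, f (Fin.snoc y t) * ∏ i, ν (Fin.castSucc i) (y i))
      (fun s => hnn _ s) (fun m => Bs_nonneg (fun i s => hnn _ s) m)
      (hg _) (Bs_GLC (fun i s => hnn _ s) (fun i => hg _))
      (Bs_DP (fun i s => hnn _ s) (fun i => hdp _))
      ?_ ?_ ?_ k
    · intro t m
      exact ih (fun i => ν (Fin.castSucc i)) (fun i s => hnn _ s) (fun i => hg _)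
        (fun i => hdp _) (fun y => f (Fin.snoc y t))
        (fun y y' h => hf (snoc_mono h le_rfl)) m
    · intro t m
      refine Finset.sum_le_sum fun y hy => ?_
      refine mul_le_mul_of_nonneg_right ?_
        (Finset.prod_nonneg fun i _ => hnn _ _)
      exact hf (snoc_mono le_rfl (Nat.le_succ t))
    · intro t m hm
      rw [Bs] at hm
      have hz := (Finset.sum_eq_zero_iff_of_nonneg
        (fun y (_ : y ∈ eslice n m) => Finset.prod_nonneg
          fun i _ => hnn (Fin.castSucc i) _)).1 hm
      refine Finset.sum_eq_zero fun y hy => ?_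
      rw [hz y hy, mul_zero]

/-- Efron's theorem, general `n`, discrete case: for independent `X₁,…,Xₙ`
with log-concave laws, the canonical measures (laws of `(X₁,…,Xₙ)` given
`Sₙ = k`) are stochastically increasing in `k`: for every bounded
coordinatewise-increasing `f : ℕⁿ → ℝ`,
`E[f(𝐗ₙ) | Sₙ = k] ≤ E[f(𝐗ₙ) | Sₙ = k+1]`. -/
theorem efron {n : ℕ} (ν : Fin n → ℕ → ℝ)
    (hlc : ∀ i, LogConcavePMF (ν i)) (hs : ∀ i, HasSum (ν i) 1)
    (k : ℕ) (hk : 0 < sumLaw ν k) (hk' : 0 < sumLaw ν (k + 1))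
    (f : (Fin n → ℕ) → ℝ) (hf : Monotone f) (hfb : ∃ C, ∀ x, |f x| ≤ C) :
    (∑' x : Fin n → ℕ, if (∑ i, x i) = k then f x * ∏ i, ν i (x i) else 0) /
        sumLaw ν k ≤
      (∑' x : Fin n → ℕ, if (∑ i, x i) = k + 1 then f x * ∏ i, ν i (x i) else 0) /
        sumLaw ν (k + 1) := by
  have hnn : ∀ i s, 0 ≤ ν i s := fun i s => (hlc i).1 s
  have hdp : ∀ i, DP (ν i) := fun i => (hlc i).2.1
  have hg : ∀ i, GLC (ν i) := fun i => glc_of_pmf (hlc i).1 (hlc i).2.1 (hlc i).2.2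
  have hsl : ∀ K : ℕ, sumLaw ν K = Bs n ν K := fun K =>
    tsum_slice n K (fun x => ∏ i, ν i (x i))
  rw [hsl k] at hk
  rw [hsl (k+1)] at hk'
  rw [tsum_slice n k, tsum_slice n (k+1), hsl k, hsl (k+1), div_le_div_iff₀ hk hk']
  exact cross n ν hnn hg hdp f hf k
end

section
/- (Sandwich lemma for stochastic domination) Let (μₙ) be a sequence of probability measures on ℕ^ℓ and μ a probability measure on ℕ^ℓ. Suppose for every ε > 0 there exist sequences (αₙ), (βₙ) of probability measures with αₙ ≼ μₙ ≼ βₙ (stochastic domination in the coordinatewise order) and αₙ → α, βₙ → β weakly, where α ≼ μ ≼ β and α, β can be taken converging to μ (i.e., for every bounded increasing f, |∫f dα − ∫f dμ| < ε and |∫f dβ − ∫f dμ| < ε). Then μₙ → μ weakly. -/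
open scoped BigOperators
open Filter

/-- A probability mass function on `ℕ^ℓ`. -/
def IsPMF {ℓ : ℕ} (p : (Fin ℓ → ℕ) → ℝ) : Prop :=
  (∀ x, 0 ≤ p x) ∧ HasSum p 1

/-- Stochastic domination in the coordinatewise order on `ℕ^ℓ`:
`p ≼ q` iff `∫ f dp ≤ ∫ f dq` for every bounded coordinatewise-increasing `f`. -/
def StochDom {ℓ : ℕ} (p q : (Fin ℓ → ℕ) → ℝ) : Prop :=
  ∀ f : (Fin ℓ → ℕ) → ℝ, Monotone f → (∃ C, ∀ x, |f x| ≤ C) →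
    (∑' x, f x * p x) ≤ ∑' x, f x * q x

section scheffe
variable {ι : Type*}

lemma scheffe_aux (p : ℕ → ι → ℝ) (q : ι → ℝ)
    (hp0 : ∀ n x, 0 ≤ p n x) (hp1 : ∀ n, HasSum (p n) 1)
    (hq0 : ∀ x, 0 ≤ q x) (hq1 : HasSum q 1)
    (hconv : ∀ x, Tendsto (fun n => p n x) atTop (nhds (q x)))
    (f : ι → ℝ) (C : ℝ) (hC : 0 ≤ C) (hf : ∀ x, |f x| ≤ C) :
    Tendsto (fun n => ∑' x, f x * p n x) atTop (nhds (∑' x, f x * q x)) := by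
  have hqsum : Summable q := hq1.summable
  have hpsum : ∀ n, Summable (p n) := fun n => (hp1 n).summable
  -- dominated convergence for the positive part
  have hdom : Tendsto (fun n => ∑' x, max (q x - p n x) 0) atTop (nhds 0) := by
    have : Tendsto (fun n => ∑' x, max (q x - p n x) 0) atTop
        (nhds (∑' _ : ι, (0 : ℝ))) := by
      refine tendsto_tsum_of_dominated_convergence hqsum (fun x => ?_) ?_
      · have : Tendsto (fun n => q x - p n x) atTop (nhds (q x - q x)) :=
          tendsto_const_nhds.sub (hconv x)
        simpa using this.max (tendsto_const_nhds (x := (0:ℝ)))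
      · filter_upwards with n x
        rw [Real.norm_eq_abs, abs_of_nonneg (le_max_right _ _)]
        exact max_le (by linarith [hp0 n x]) (hq0 x)
    simpa using this
  -- L1 identity
  have hposSummable : ∀ n, Summable (fun x => max (q x - p n x) 0) := by
    intro n
    refine Summable.of_nonneg_of_le (fun x => le_max_right _ _) (fun x => ?_) hqsum
    exact max_le (by linarith [hp0 n x]) (hq0 x)
  have hdiffSummable : ∀ n, Summable (fun x => p n x - q x) := fun n =>
    (hpsum n).sub hqsum
  have habsSummable : ∀ n, Summable (fun x => |p n x - q x|) := fun n =>
    (hdiffSummable n).abs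
  have hL1 : ∀ n, ∑' x, |p n x - q x| = 2 * ∑' x, max (q x - p n x) 0 := by
    intro n
    have hpt : ∀ x, |p n x - q x| = (p n x - q x) + 2 * max (q x - p n x) 0 := by
      intro x
      rcases le_total (p n x) (q x) with hle | hle
      · rw [abs_of_nonpos (by linarith), max_eq_left (by linarith)]; ring
      · rw [abs_of_nonneg (by linarith), max_eq_right (by linarith)]; ring
    calc ∑' x, |p n x - q x|
        = ∑' x, ((p n x - q x) + 2 * max (q x - p n x) 0) := by
          exact tsum_congr hpt
      _ = (∑' x, (p n x - q x)) + ∑' x, 2 * max (q x - p n x) 0 :=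
          Summable.tsum_add (hdiffSummable n) ((hposSummable n).mul_left 2)
      _ = 2 * ∑' x, max (q x - p n x) 0 := by
          rw [((hp1 n).sub hq1).tsum_eq, tsum_mul_left]; ring_nf
  -- summability of the test integrals
  have hfp : ∀ n, Summable (fun x => f x * p n x) := by
    intro n
    refine Summable.of_norm_bounded ((hpsum n).mul_left C) (fun x => ?_)
    rw [norm_mul, Real.norm_eq_abs, Real.norm_eq_abs, abs_of_nonneg (hp0 n x)]
    exact mul_le_mul_of_nonneg_right (hf x) (hp0 n x)
  have hfq : Summable (fun x => f x * q x) := by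
    refine Summable.of_norm_bounded (hqsum.mul_left C) (fun x => ?_)
    rw [norm_mul, Real.norm_eq_abs, Real.norm_eq_abs, abs_of_nonneg (hq0 x)]
    exact mul_le_mul_of_nonneg_right (hf x) (hq0 x)
  rw [tendsto_iff_norm_sub_tendsto_zero]
  have hbound : ∀ n, ‖(∑' x, f x * p n x) - ∑' x, f x * q x‖ ≤
      C * (2 * ∑' x, max (q x - p n x) 0) := by
    intro n
    rw [← Summable.tsum_sub (hfp n) hfq]
    calc ‖∑' x, (f x * p n x - f x * q x)‖
        ≤ ∑' x, ‖f x * p n x - f x * q x‖ := by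
          refine norm_tsum_le_tsum_norm ?_
          exact ((hfp n).sub hfq).abs
      _ ≤ ∑' x, C * |p n x - q x| := by
          refine Summable.tsum_le_tsum (fun x => ?_) (((hfp n).sub hfq).abs)
            ((habsSummable n).mul_left C)
          rw [Real.norm_eq_abs, ← mul_sub, abs_mul]
          exact mul_le_mul_of_nonneg_right (hf x) (abs_nonneg _)
      _ = C * (2 * ∑' x, max (q x - p n x) 0) := by
          rw [tsum_mul_left, hL1 n]
  have h2 : Tendsto (fun n => C * (2 * ∑' x, max (q x - p n x) 0)) atTop (nhds 0) := by
    simpa using (hdom.const_mul 2).const_mul C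
  refine squeeze_zero (fun n => norm_nonneg _) hbound h2
end scheffe

section sandwich
variable {ℓ : ℕ}

/-- Convergence of integrals of bounded monotone test functions. -/
lemma sandwich_test
    (μseq : ℕ → (Fin ℓ → ℕ) → ℝ) (μ : (Fin ℓ → ℕ) → ℝ)
    (hμseq : ∀ n, IsPMF (μseq n)) (hμ : IsPMF μ)
    (h : ∀ ε : ℝ, 0 < ε →
      ∃ (α β : (Fin ℓ → ℕ) → ℝ) (a b : ℕ → (Fin ℓ → ℕ) → ℝ),
        IsPMF α ∧ IsPMF β ∧
        (∀ n, IsPMF (a n) ∧ IsPMF (b n) ∧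
          StochDom (a n) (μseq n) ∧ StochDom (μseq n) (b n)) ∧
        (∀ x, Tendsto (fun n => a n x) atTop (nhds (α x))) ∧
        (∀ x, Tendsto (fun n => b n x) atTop (nhds (β x))) ∧
        StochDom α μ ∧ StochDom μ β ∧
        (∀ f : (Fin ℓ → ℕ) → ℝ, Monotone f → (∃ C, ∀ x, |f x| ≤ C) →
          |(∑' x, f x * α x) - ∑' x, f x * μ x| < ε ∧
          |(∑' x, f x * β x) - ∑' x, f x * μ x| < ε))
    (f : (Fin ℓ → ℕ) → ℝ) (hfmono : Monotone f) (C : ℝ) (hfC : ∀ x, |f x| ≤ C) :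
    Tendsto (fun n => ∑' x, f x * μseq n x) atTop (nhds (∑' x, f x * μ x)) := by
  have hC : 0 ≤ C := le_trans (abs_nonneg _) (hfC (fun _ => 0))
  rw [Metric.tendsto_atTop]
  intro ε hε
  obtain ⟨α, β, a, b, hα, hβ, hab, haconv, hbconv, hαμ, hμβ, hclose⟩ := h ε hε
  have hbdd : ∃ C', ∀ x, |f x| ≤ C' := ⟨C, hfC⟩
  -- limits of the sandwiching integrals
  have haT : Tendsto (fun n => ∑' x, f x * a n x) atTop (nhds (∑' x, f x * α x)) :=
    scheffe_aux a α (fun n => (hab n).1.1) (fun n => (hab n).1.2) hα.1 hα.2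
      haconv f C hC hfC
  have hbT : Tendsto (fun n => ∑' x, f x * b n x) atTop (nhds (∑' x, f x * β x)) :=
    scheffe_aux b β (fun n => (hab n).2.1.1) (fun n => (hab n).2.1.2) hβ.1 hβ.2
      hbconv f C hC hfC
  obtain ⟨hcα, hcβ⟩ := hclose f hfmono hbdd
  have hαlb : (∑' x, f x * μ x) - ε < ∑' x, f x * α x := by
    have := abs_lt.1 hcα; linarith [this.1]
  have hβub : ∑' x, f x * β x < (∑' x, f x * μ x) + ε := by
    have := abs_lt.1 hcβ; linarith [(abs_lt.1 hcβ).2]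
  have h1 : ∀ᶠ n in atTop, (∑' x, f x * μ x) - ε < ∑' x, f x * a n x :=
    haT.eventually (eventually_gt_nhds hαlb)
  have h2 : ∀ᶠ n in atTop, ∑' x, f x * b n x < (∑' x, f x * μ x) + ε :=
    hbT.eventually (eventually_lt_nhds hβub)
  have hev : ∀ᶠ n in atTop, dist (∑' x, f x * μseq n x) (∑' x, f x * μ x) < ε := by
    filter_upwards [h1, h2] with n hn1 hn2
    have hle1 : (∑' x, f x * a n x) ≤ ∑' x, f x * μseq n x :=
      (hab n).2.2.1 f hfmono hbdd
    have hle2 : (∑' x, f x * μseq n x) ≤ ∑' x, f x * b n x :=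
      (hab n).2.2.2 f hfmono hbdd
    rw [Real.dist_eq, abs_lt]
    constructor <;> linarith
  obtain ⟨N, hN⟩ := (eventually_atTop).1 hev
  exact ⟨N, hN⟩

end sandwich

/-- Sandwich lemma for stochastic domination: if for every `ε > 0` there are
pmf sequences `aₙ ≼ μₙ ≼ bₙ` converging weakly (pointwise) to `α`, `β` with
`α ≼ μ ≼ β` and `α`, `β` within `ε` of `μ` on every bounded increasing test
function, then `μₙ → μ` weakly (pointwise). -/
theorem sandwich_stochastic_domination {ℓ : ℕ}
    (μseq : ℕ → (Fin ℓ → ℕ) → ℝ) (μ : (Fin ℓ → ℕ) → ℝ)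
    (hμseq : ∀ n, IsPMF (μseq n)) (hμ : IsPMF μ)
    (h : ∀ ε : ℝ, 0 < ε →
      ∃ (α β : (Fin ℓ → ℕ) → ℝ) (a b : ℕ → (Fin ℓ → ℕ) → ℝ),
        IsPMF α ∧ IsPMF β ∧
        (∀ n, IsPMF (a n) ∧ IsPMF (b n) ∧
          StochDom (a n) (μseq n) ∧ StochDom (μseq n) (b n)) ∧
        (∀ x, Tendsto (fun n => a n x) atTop (nhds (α x))) ∧
        (∀ x, Tendsto (fun n => b n x) atTop (nhds (β x))) ∧
        StochDom α μ ∧ StochDom μ β ∧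
        (∀ f : (Fin ℓ → ℕ) → ℝ, Monotone f → (∃ C, ∀ x, |f x| ≤ C) →
          |(∑' x, f x * α x) - ∑' x, f x * μ x| < ε ∧
          |(∑' x, f x * β x) - ∑' x, f x * μ x| < ε)) :
    ∀ x, Tendsto (fun n => μseq n x) atTop (nhds (μ x)) := by
  classical
  intro x
  -- two up-set indicator functions whose difference is the indicator of {x}
  set f₁ : (Fin ℓ → ℕ) → ℝ := fun y => if x ≤ y then 1 else 0 with hf₁def
  set f₂ : (Fin ℓ → ℕ) → ℝ := fun y => if x ≤ y ∧ y ≠ x then 1 else 0 with hf₂def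
  have hf₁mono : Monotone f₁ := by
    intro y z hyz
    simp only [hf₁def]
    by_cases hy : x ≤ y
    · rw [if_pos hy, if_pos (hy.trans hyz)]
    · rw [if_neg hy]; positivity
  have hf₂mono : Monotone f₂ := by
    intro y z hyz
    simp only [hf₂def]
    by_cases hy : x ≤ y ∧ y ≠ x
    · have hz : x ≤ z ∧ z ≠ x := by
        refine ⟨hy.1.trans hyz, fun hzx => hy.2 (le_antisymm ?_ hy.1)⟩
        rw [← hzx]; exact hyz
      rw [if_pos hy, if_pos hz]
    · rw [if_neg hy]; positivity
  have hf₁bd : ∀ y, |f₁ y| ≤ 1 := by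
    intro y; simp only [hf₁def]; split <;> simp
  have hf₂bd : ∀ y, |f₂ y| ≤ 1 := by
    intro y; simp only [hf₂def]; split <;> simp
  -- point mass identity
  have hpoint : ∀ (p : (Fin ℓ → ℕ) → ℝ), IsPMF p →
      (∑' y, f₁ y * p y) - (∑' y, f₂ y * p y) = p x := by
    intro p hp
    have hpsum : Summable p := hp.2.summable
    have hs₂ : Summable (fun y => f₂ y * p y) := by
      refine Summable.of_norm_bounded hpsum (fun y => ?_)
      rw [norm_mul, Real.norm_eq_abs, Real.norm_eq_abs, abs_of_nonneg (hp.1 y)]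
      calc |f₂ y| * p y ≤ 1 * p y :=
            mul_le_mul_of_nonneg_right (hf₂bd y) (hp.1 y)
        _ = p y := one_mul _
    have hsδ : Summable (fun y => if y = x then p x else 0) := by
      refine summable_of_finite_support ?_
      apply Set.Finite.subset (Set.finite_singleton x)
      intro y hy
      by_contra hyx
      simp only [Function.mem_support] at hy
      exact hy (if_neg (by simpa using hyx))
    have hkey : ∀ y, f₁ y * p y = f₂ y * p y + (if y = x then p x else 0) := by
      intro y
      by_cases hyx : y = x
      · subst hyx
        simp [hf₁def, hf₂def, le_refl]
      · simp only [hf₁def, hf₂def, if_neg hyx]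
        by_cases hxy : x ≤ y
        · rw [if_pos hxy, if_pos ⟨hxy, hyx⟩]; ring
        · rw [if_neg hxy, if_neg (fun hc => hxy hc.1)]; ring
    rw [tsum_congr hkey, Summable.tsum_add hs₂ hsδ, tsum_ite_eq]
    ring
  -- convergence of the two test integrals
  have hT₁ : Tendsto (fun n => ∑' y, f₁ y * μseq n y) atTop
      (nhds (∑' y, f₁ y * μ y)) :=
    sandwich_test μseq μ hμseq hμ h f₁ hf₁mono 1 hf₁bd
  have hT₂ : Tendsto (fun n => ∑' y, f₂ y * μseq n y) atTop
      (nhds (∑' y, f₂ y * μ y)) :=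
    sandwich_test μseq μ hμseq hμ h f₂ hf₂mono 1 hf₂bd
  have := hT₁.sub hT₂
  rw [hpoint μ hμ] at this
  refine this.congr (fun n => hpoint (μseq n) (hμseq n))
end

section
/- (Monotonicity of the basic coupling rates) For the misanthrope-type particle system with jump rates r(𝐱, θ^{ij}𝐱) = gᵢ(xᵢ)·1{x_j < max_j}, if each gᵢ is nondecreasing on [0, maxᵢ] with gᵢ(0) = 0, then every transition of the basic coupling with positive rate maps an ordered pair of configurations (𝐱 ≤ 𝐱′ coordinatewise) to an ordered pair (𝐳 ≤ 𝐳′). -/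
open scoped BigOperators
open scoped Classical

/-- Move one particle from site `i` to site `j`. -/
def moveP {n : ℕ} (x : Fin n → ℕ) (i j : Fin n) : Fin n → ℕ :=
  fun h => x h - (if h = i then 1 else 0) + (if h = j then 1 else 0)

/-- Basic coupling rates for the misanthrope-type particle system with jump
rates `r(x, θ^{ij}x) = gᵢ(xᵢ)·1{x_j < max_j}`: joint jumps at the minimum
rate `gᵢ(xᵢ) ∧ gᵢ(xᵢ')` when both target sites admit the particle, lone jumps
of the unblocked coordinate at the minimum rate when the other coordinate's
target site is full, and residual lone jumps at rates `(gᵢ(xᵢ') - gᵢ(xᵢ))⁺`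
and `(gᵢ(xᵢ) - gᵢ(xᵢ'))⁺`. -/
noncomputable def basicCouplingRate {n : ℕ} (g : Fin n → ℕ → ℝ) (mx : Fin n → ℕ)
    (p u : (Fin n → ℕ) × (Fin n → ℕ)) : ℝ :=
  ∑ i : Fin n, ∑ j : Fin n,
    if i ≠ j then
      (if u = (moveP p.1 i j, moveP p.2 i j) ∧ 1 ≤ p.1 i ∧ 1 ≤ p.2 i ∧
          p.1 j < mx j ∧ p.2 j < mx j
        then min (g i (p.1 i)) (g i (p.2 i)) else 0) +
      (if u = (p.1, moveP p.2 i j) ∧ 1 ≤ p.2 i ∧ p.1 j = mx j ∧ p.2 j < mx j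
        then min (g i (p.1 i)) (g i (p.2 i)) else 0) +
      (if u = (moveP p.1 i j, p.2) ∧ 1 ≤ p.1 i ∧ p.1 j < mx j ∧ p.2 j = mx j
        then min (g i (p.1 i)) (g i (p.2 i)) else 0) +
      (if u = (p.1, moveP p.2 i j) ∧ 1 ≤ p.2 i ∧ p.2 j < mx j
        then max (g i (p.2 i) - g i (p.1 i)) 0 else 0) +
      (if u = (moveP p.1 i j, p.2) ∧ 1 ≤ p.1 i ∧ p.1 j < mx j
        then max (g i (p.1 i) - g i (p.2 i)) 0 else 0)
    else 0

/-- Monotonicity of the basic coupling: if each rate function `gᵢ` is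
nondecreasing on `[0, maxᵢ]` with `gᵢ(0) = 0` and `gᵢ ≥ 0`, then every
transition of the basic coupling with positive rate maps an ordered pair of
configurations in the state space `∏ᵢ [0, maxᵢ]` to an ordered pair. -/
theorem basicCoupling_monotone {n : ℕ} (g : Fin n → ℕ → ℝ) (mx : Fin n → ℕ)
    (hg0 : ∀ i, g i 0 = 0) (hgpos : ∀ i z, 0 ≤ g i z)
    (hgmono : ∀ i, ∀ z z' : ℕ, z ≤ z' → z' ≤ mx i → g i z ≤ g i z') :
    ∀ p u : (Fin n → ℕ) × (Fin n → ℕ),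
      (∀ h, p.1 h ≤ mx h) → (∀ h, p.2 h ≤ mx h) → p.1 ≤ p.2 →
      0 < basicCouplingRate g mx p u → u.1 ≤ u.2 := by
  intro p u hp1 hp2 hle hpos
  unfold basicCouplingRate at hpos
  obtain ⟨i, -, hi⟩ := Finset.exists_lt_of_sum_lt
    (show (∑ _i : Fin n, (0:ℝ)) < _ by simpa using hpos)
  obtain ⟨j, -, hj⟩ := Finset.exists_lt_of_sum_lt
    (show (∑ _j : Fin n, (0:ℝ)) < _ by simpa using hi)
  by_cases hij : i = j
  · rw [if_pos hij] at hj; exact absurd hj (lt_irrefl 0)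
  rw [if_neg hij] at hj
  set A := if u = (moveP p.1 i j, moveP p.2 i j) ∧ 1 ≤ p.1 i ∧ 1 ≤ p.2 i ∧
      p.1 j < mx j ∧ p.2 j < mx j then min (g i (p.1 i)) (g i (p.2 i)) else 0 with hA
  set B := if u = (p.1, moveP p.2 i j) ∧ 1 ≤ p.2 i ∧ p.1 j = mx j ∧ p.2 j < mx j
      then min (g i (p.1 i)) (g i (p.2 i)) else 0 with hB
  set C := if u = (moveP p.1 i j, p.2) ∧ 1 ≤ p.1 i ∧ p.1 j < mx j ∧ p.2 j = mx j
      then min (g i (p.1 i)) (g i (p.2 i)) else 0 with hC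
  set D := if u = (p.1, moveP p.2 i j) ∧ 1 ≤ p.2 i ∧ p.2 j < mx j
      then max (g i (p.2 i) - g i (p.1 i)) 0 else 0 with hD
  set E := if u = (moveP p.1 i j, p.2) ∧ 1 ≤ p.1 i ∧ p.1 j < mx j
      then max (g i (p.1 i) - g i (p.2 i)) 0 else 0 with hE
  have h5 : 0 < A ∨ 0 < B ∨ 0 < C ∨ 0 < D ∨ 0 < E := by
    by_contra h
    push_neg at h
    linarith [h.1, h.2.1, h.2.2.1, h.2.2.2.1, h.2.2.2.2]
  have hled : ∀ k, p.1 k ≤ p.2 k := fun k => Pi.le_def.mp hle k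
  have hgle : g i (p.1 i) ≤ g i (p.2 i) := hgmono i _ _ (hled i) (hp2 i)
  rcases h5 with h | h | h | h | h
  · -- joint jump
    rw [hA] at h
    split_ifs at h with hc
    · obtain ⟨hu, h1, h2, -, -⟩ := hc
      rw [hu]
      intro k
      simp only [moveP]
      have h1k := hled k
      have h1i := hled i
      have h1j := hled j
      by_cases hk : k = i <;> by_cases hk' : k = j <;>
        simp [hk, hk', hij, Ne.symm hij] <;> omega
    · exact absurd h (lt_irrefl 0)
  · -- blocked first coordinate: impossible since p.1 j = mx j but p.2 j < mx j
    rw [hB] at h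
    split_ifs at h with hc
    · obtain ⟨-, -, hjm, hjm'⟩ := hc
      have := hled j
      omega
    · exact absurd h (lt_irrefl 0)
  · -- blocked second coordinate
    rw [hC] at h
    split_ifs at h with hc
    · obtain ⟨hu, h1, hjm, hjm'⟩ := hc
      rw [hu]
      intro k
      simp only [moveP]
      have h1k := hled k
      have h1i := hled i
      have h1j := hled j
      by_cases hk : k = i <;> by_cases hk' : k = j <;>
        simp [hk, hk', hij, Ne.symm hij] <;> omega
    · exact absurd h (lt_irrefl 0)
  · -- residual jump of second coordinate
    rw [hD] at h
    split_ifs at h with hc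
    · obtain ⟨hu, h2, -⟩ := hc
      have hglt : g i (p.1 i) < g i (p.2 i) := by
        rcases lt_or_ge (g i (p.1 i)) (g i (p.2 i)) with h' | h'
        · exact h'
        · exfalso
          rw [max_eq_right (by linarith)] at h
          exact lt_irrefl 0 h
      have hilt : p.1 i < p.2 i := by
        by_contra hcon
        push_neg at hcon
        exact absurd (hgmono i _ _ hcon (hp1 i)) (not_le_of_gt hglt)
      rw [hu]
      intro k
      simp only [moveP]
      have h1k := hled k
      have h1i := hled i
      have h1j := hled j
      by_cases hk : k = i <;> by_cases hk' : k = j <;>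
        simp [hk, hk', hij, Ne.symm hij] <;> omega
    · exact absurd h (lt_irrefl 0)
  · -- residual jump of first coordinate: impossible since g(p.1 i) ≤ g(p.2 i)
    rw [hE] at h
    split_ifs at h with hc
    · rw [max_eq_right (by linarith)] at h
      exact absurd h (lt_irrefl 0)
    · exact absurd h (lt_irrefl 0)
end
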